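/- arXiv:math/0306318 — 5 statements merged into one kernel-verified Lean document; each statement's English description precedes it below -/
import Mathlib

section
/- Let P be a minimal prime ideal of I_mn(2). Then none of the four corner variables x_{1,1}, x_{1,n}, x_{m,1}, x_{m,n} belongs to P. -/
open MvPolynomial

/-- The ideal of adjacent 2×2 minors of the generic `m × n` matrix. -/
noncomputable def adjMinors2Ideal (K : Type*) [Field K] (m n : ℕ) :
    Ideal (MvPolynomial (Fin m × Fin n) K) :=
  Ideal.span {f | ∃ (i j : ℕ) (hi : i + 1 < m) (hj : j + 1 < n),
    f = X (⟨i, by omega⟩, ⟨j, by omega⟩) * X (⟨i + 1, hi⟩, ⟨j + 1, hj⟩)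
      - X (⟨i, by omega⟩, ⟨j + 1, hj⟩) * X (⟨i + 1, hi⟩, ⟨j, by omega⟩)}

lemma minor_mem {K : Type*} [Field K] {m n : ℕ} (i j : ℕ) (hi : i + 1 < m) (hj : j + 1 < n) :
    X (⟨i, by omega⟩, ⟨j, by omega⟩) * X (⟨i + 1, hi⟩, ⟨j + 1, hj⟩)
      - X (⟨i, by omega⟩, ⟨j + 1, hj⟩) * X (⟨i + 1, hi⟩, ⟨j, by omega⟩)
      ∈ adjMinors2Ideal K m n :=
  Ideal.subset_span ⟨i, j, hi, hj, rfl⟩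

/-- Key auxiliary lemma: a "deformation to `(R/P)[t]`" argument.  If there is a
substitution `g` for the variables with values in `(R/P)[t]` that (a) reduces to the
canonical map at `t = 0`, (b) kills all adjacent minors, and (c) is nonzero at some
variable `p0`, then `X p0` is not in the minimal prime `P`. -/
lemma no_corner_aux {K : Type*} [Field K] {m n : ℕ}
    (P : Ideal (MvPolynomial (Fin m × Fin n) K))
    (hP : P ∈ (adjMinors2Ideal K m n).minimalPrimes)
    (g : Fin m × Fin n → Polynomial (MvPolynomial (Fin m × Fin n) K ⧸ P))
    (h0 : ∀ p, Polynomial.eval 0 (g p) = Ideal.Quotient.mk P (X p))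
    (hgen : ∀ (i j : ℕ) (hi : i + 1 < m) (hj : j + 1 < n),
      g (⟨i, by omega⟩, ⟨j, by omega⟩) * g (⟨i + 1, hi⟩, ⟨j + 1, hj⟩)
        - g (⟨i, by omega⟩, ⟨j + 1, hj⟩) * g (⟨i + 1, hi⟩, ⟨j, by omega⟩) = 0)
    (p0 : Fin m × Fin n) (hp0 : g p0 ≠ 0) :
    X p0 ∉ P := by
  intro hmem
  haveI := hP.1.1
  set A := MvPolynomial (Fin m × Fin n) K ⧸ P
  let fK : K →+* Polynomial A :=
    Polynomial.C.comp ((Ideal.Quotient.mk P).comp MvPolynomial.C)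
  let φ : MvPolynomial (Fin m × Fin n) K →+* Polynomial A := eval₂Hom fK g
  have key : ∀ x, Polynomial.eval 0 (φ x) = Ideal.Quotient.mk P x := by
    intro x
    show Polynomial.evalRingHom (0 : A) (eval₂ fK g x) = _
    rw [eval₂_comp_left (Polynomial.evalRingHom (0 : A)) fK g]
    have h1 : (Polynomial.evalRingHom (0 : A)).comp fK
        = (Ideal.Quotient.mk P).comp MvPolynomial.C := by
      ext r; simp [fK]
    have h2 : (Polynomial.evalRingHom (0 : A)) ∘ g = fun p => Ideal.Quotient.mk P (X p) := by
      funext p; exact h0 p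
    rw [h1, h2]
    have h3 : (Ideal.Quotient.mk P) (eval₂ MvPolynomial.C X x) = eval₂
        ((Ideal.Quotient.mk P).comp MvPolynomial.C)
        ((Ideal.Quotient.mk P) ∘ X) x :=
      eval₂_comp_left _ _ _ _
    rw [eval₂_eta] at h3
    exact h3.symm
  have hker_le : RingHom.ker φ ≤ P := by
    intro x hx
    rw [RingHom.mem_ker] at hx
    have := key x
    rw [hx, Polynomial.eval_zero] at this
    exact (Ideal.Quotient.eq_zero_iff_mem).mp this.symm
  have hIker : adjMinors2Ideal K m n ≤ RingHom.ker φ := by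
    rw [adjMinors2Ideal, Ideal.span_le]
    rintro f ⟨i, j, hi, hj, rfl⟩
    simp only [SetLike.mem_coe, RingHom.mem_ker, map_sub, map_mul]
    have hx : ∀ p, φ (X p) = g p := fun p => by simp only [φ, eval₂Hom_X']
    rw [hx, hx, hx, hx]
    exact hgen i j hi hj
  haveI hkp : (RingHom.ker φ).IsPrime := RingHom.ker_isPrime φ
  have hPle : P ≤ RingHom.ker φ := hP.2 ⟨hkp, hIker⟩ hker_le
  have : φ (X p0) = 0 := hPle hmem
  rw [eval₂Hom_X'] at this
  exact hp0 this

lemma Cminor {A : Type*} [CommRing A] {a b c d : A} (h : a * b - c * d = 0) :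
    (Polynomial.C a * Polynomial.C b - Polynomial.C c * Polynomial.C d : Polynomial A) = 0 := by
  rw [← Polynomial.C_mul, ← Polynomial.C_mul, ← Polynomial.C_sub, h, Polynomial.C_0]

set_option maxHeartbeats 2000000 in
open Polynomial in
theorem corner00 {K : Type*} [Field K] {m n : ℕ} (hm : 2 ≤ m) (hn : 2 ≤ n)
    (P : Ideal (MvPolynomial (Fin m × Fin n) K))
    (hP : P ∈ (adjMinors2Ideal K m n).minimalPrimes) :
    X ((⟨0, Nat.zero_lt_of_lt hm⟩ : Fin m), (⟨0, Nat.zero_lt_of_lt hn⟩ : Fin n)) ∉ P := by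
  haveI := hP.1.1
  intro h00
  have hIP := hP.1.2
  -- images of the minors vanish
  have hminP : ∀ (i j : ℕ) (hi : i + 1 < m) (hj : j + 1 < n),
      (Ideal.Quotient.mk P) (X (⟨i, by omega⟩, ⟨j, by omega⟩)) * (Ideal.Quotient.mk P) (X (⟨i + 1, hi⟩, ⟨j + 1, hj⟩))
        - (Ideal.Quotient.mk P) (X (⟨i, by omega⟩, ⟨j + 1, hj⟩)) * (Ideal.Quotient.mk P) (X (⟨i + 1, hi⟩, ⟨j, by omega⟩)) = 0 := by
    intro i j hi hj
    rw [← map_mul, ← map_mul, ← map_sub]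
    exact Ideal.Quotient.eq_zero_iff_mem.mpr (hIP (minor_mem i j hi hj))
  have hq00 : (Ideal.Quotient.mk P) (X ((⟨0, by omega⟩ : Fin m), (⟨0, by omega⟩ : Fin n))) = 0 :=
    Ideal.Quotient.eq_zero_iff_mem.mpr h00
  -- product of the two neighbours of the corner vanishes
  have hprod : (Ideal.Quotient.mk P) (X ((⟨0, by omega⟩ : Fin m), (⟨1, by omega⟩ : Fin n)))
      * (Ideal.Quotient.mk P) (X ((⟨1, by omega⟩ : Fin m), (⟨0, by omega⟩ : Fin n))) = 0 := by
    have h := hminP 0 0 (by omega) (by omega)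
    rw [show ((⟨0 + 1, by omega⟩ : Fin m)) = (⟨1, by omega⟩ : Fin m) from rfl,
      show ((⟨0 + 1, by omega⟩ : Fin n)) = (⟨1, by omega⟩ : Fin n) from rfl] at h
    rw [hq00, zero_mul, zero_sub, neg_eq_zero] at h
    exact h
  by_cases h11 : X ((⟨1, by omega⟩ : Fin m), (⟨1, by omega⟩ : Fin n)) ∈ P
  · -- Map D : send the corner variable to `t`, everything else to its class.
    have hq11 : (Ideal.Quotient.mk P) (X ((⟨1, by omega⟩ : Fin m), (⟨1, by omega⟩ : Fin n))) = 0 :=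
      Ideal.Quotient.eq_zero_iff_mem.mpr h11
    refine no_corner_aux P hP
      (fun p => if p.1 = (⟨0, by omega⟩ : Fin m) ∧ p.2 = (⟨0, by omega⟩ : Fin n)
        then Polynomial.X else Polynomial.C ((Ideal.Quotient.mk P) (X p))) ?_ ?_ _ ?_ h00
    · intro p
      by_cases hc : p.1 = (⟨0, by omega⟩ : Fin m) ∧ p.2 = (⟨0, by omega⟩ : Fin n)
      · obtain ⟨p1, p2⟩ := p
        obtain ⟨hc1, hc2⟩ := hc
        subst hc1; subst hc2
        rw [if_pos ⟨rfl, rfl⟩, Polynomial.eval_X, hq00]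
      · rw [if_neg hc, Polynomial.eval_C]
    · intro i j hi hj
      dsimp only
      by_cases hij : i = 0 ∧ j = 0
      · obtain ⟨rfl, rfl⟩ := hij
        rw [show ((⟨0 + 1, hi⟩ : Fin m)) = (⟨1, by omega⟩ : Fin m) from rfl,
          show ((⟨0 + 1, hj⟩ : Fin n)) = (⟨1, by omega⟩ : Fin n) from rfl]
        simp only [show ((⟨1, by omega⟩ : Fin m) = ⟨0, by omega⟩) = False by
            simp [Fin.ext_iff],
          show ((⟨1, by omega⟩ : Fin n) = ⟨0, by omega⟩) = False by
            simp [Fin.ext_iff],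
          eq_self_iff_true, if_true, if_false, true_and, and_true, and_false, false_and]
        rw [hq11, Polynomial.C_0, mul_zero, zero_sub, neg_eq_zero, ← Polynomial.C_mul,
          hprod, Polynomial.C_0]
      · have hne : ∀ (a : Fin m) (b : Fin n), ¬(a.val = 0 ∧ b.val = 0) →
            ¬(a = (⟨0, by omega⟩ : Fin m) ∧ b = (⟨0, by omega⟩ : Fin n)) := by
          rintro a b hab ⟨rfl, rfl⟩; exact hab ⟨rfl, rfl⟩
        rw [if_neg (hne _ _ (by simpa using hij)),
          if_neg (hne _ _ (by simp)),
          if_neg (hne _ _ (by simp)),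
          if_neg (hne _ _ (by simp))]
        have h := hminP i j hi hj
        linear_combination Cminor h
    · dsimp only
      rw [if_pos ⟨rfl, rfl⟩]
      exact Polynomial.X_ne_zero
  · by_cases h01 : X ((⟨0, by omega⟩ : Fin m), (⟨1, by omega⟩ : Fin n)) ∈ P
    · by_cases h10 : X ((⟨1, by omega⟩ : Fin m), (⟨0, by omega⟩ : Fin n)) ∈ P
      · -- Map C : both neighbours in P, the diagonal not.
        have hq01 : (Ideal.Quotient.mk P) (X ((⟨0, by omega⟩ : Fin m), (⟨1, by omega⟩ : Fin n))) = 0 :=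
          Ideal.Quotient.eq_zero_iff_mem.mpr h01
        have hq10 : (Ideal.Quotient.mk P) (X ((⟨1, by omega⟩ : Fin m), (⟨0, by omega⟩ : Fin n))) = 0 :=
          Ideal.Quotient.eq_zero_iff_mem.mpr h10
        refine no_corner_aux P hP
          (fun p => if p.1 = (⟨0, by omega⟩ : Fin m) then
              (if p.2 = (⟨0, by omega⟩ : Fin n) then
                Polynomial.C ((Ideal.Quotient.mk P) (X ((⟨1, by omega⟩ : Fin m), (⟨1, by omega⟩ : Fin n))))
                  * Polynomial.X ^ 2
              else Polynomial.C ((Ideal.Quotient.mk P) (X p))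
                + Polynomial.C ((Ideal.Quotient.mk P) (X ((⟨1, by omega⟩ : Fin m), p.2))) * Polynomial.X)
            else if p.2 = (⟨0, by omega⟩ : Fin n) then
              Polynomial.C ((Ideal.Quotient.mk P) (X p))
                + Polynomial.C ((Ideal.Quotient.mk P) (X (p.1, (⟨1, by omega⟩ : Fin n)))) * Polynomial.X
            else Polynomial.C ((Ideal.Quotient.mk P) (X p))) ?_ ?_ _ ?_ h00
        · intro p
          by_cases hc1 : p.1 = (⟨0, by omega⟩ : Fin m)
          · by_cases hc2 : p.2 = (⟨0, by omega⟩ : Fin n)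
            · rw [if_pos hc1, if_pos hc2,
                show p = ((⟨0, by omega⟩ : Fin m), (⟨0, by omega⟩ : Fin n)) from
                  Prod.ext hc1 hc2, hq00,
                Polynomial.eval_mul, Polynomial.eval_pow, Polynomial.eval_X,
                zero_pow (by norm_num : (2 : ℕ) ≠ 0), mul_zero]
            · rw [if_pos hc1, if_neg hc2, Polynomial.eval_add, Polynomial.eval_C,
                Polynomial.eval_mul, Polynomial.eval_C, Polynomial.eval_X, mul_zero, add_zero]
          · rw [if_neg hc1]
            by_cases hc2 : p.2 = (⟨0, by omega⟩ : Fin n)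
            · rw [if_pos hc2, Polynomial.eval_add, Polynomial.eval_C,
                Polynomial.eval_mul, Polynomial.eval_C, Polynomial.eval_X, mul_zero, add_zero]
            · rw [if_neg hc2, Polynomial.eval_C]
        · intro i j hi hj
          dsimp only
          have hne1 : ((⟨i + 1, hi⟩ : Fin m)) ≠ (⟨0, by omega⟩ : Fin m) := by
            intro h; exact Nat.succ_ne_zero i (congrArg Fin.val h)
          have hne2 : ((⟨j + 1, hj⟩ : Fin n)) ≠ (⟨0, by omega⟩ : Fin n) := by
            intro h; exact Nat.succ_ne_zero j (congrArg Fin.val h)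
          rcases Nat.eq_zero_or_pos i with rfl | hipos
          · rcases Nat.eq_zero_or_pos j with rfl | hjpos
            · -- minor at the corner
              rw [show ((⟨0 + 1, hi⟩ : Fin m)) = (⟨1, by omega⟩ : Fin m) from rfl] at hne1 ⊢
              rw [show ((⟨0 + 1, hj⟩ : Fin n)) = (⟨1, by omega⟩ : Fin n) from rfl] at hne2 ⊢
              simp only [if_neg hne1, if_neg hne2, eq_self_iff_true, if_true, true_and, and_true]
              rw [hq01, hq10, Polynomial.C_0]
              ring
            · -- minor in the top row, away from the corner
              obtain ⟨l, rfl⟩ : ∃ l, j = l + 1 := ⟨j - 1, by omega⟩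
              have hne2' : ((⟨l + 1, by omega⟩ : Fin n)) ≠ (⟨0, by omega⟩ : Fin n) := by
                intro h; exact Nat.succ_ne_zero l (congrArg Fin.val h)
              rw [show ((⟨0 + 1, hi⟩ : Fin m)) = (⟨1, by omega⟩ : Fin m) from rfl]
              simp only [if_neg hne1, if_neg hne2, if_neg hne2', eq_self_iff_true, if_true, true_and, and_true]
              have h := hminP 0 (l + 1) hi hj
              rw [show ((⟨0 + 1, hi⟩ : Fin m)) = (⟨1, by omega⟩ : Fin m) from rfl] at h
              linear_combination Cminor h
          · -- minor away from the top row
            obtain ⟨k, rfl⟩ : ∃ k, i = k + 1 := ⟨i - 1, by omega⟩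
            have hne1' : ((⟨k + 1, by omega⟩ : Fin m)) ≠ (⟨0, by omega⟩ : Fin m) := by
              intro h; exact Nat.succ_ne_zero k (congrArg Fin.val h)
            rcases Nat.eq_zero_or_pos j with rfl | hjpos
            · rw [show ((⟨0 + 1, hj⟩ : Fin n)) = (⟨1, by omega⟩ : Fin n) from rfl] at hne2 ⊢
              simp only [if_neg hne1, if_neg hne1', if_neg hne2, eq_self_iff_true, if_true, true_and, and_true]
              have h := hminP (k + 1) 0 hi hj
              rw [show ((⟨0 + 1, hj⟩ : Fin n)) = (⟨1, by omega⟩ : Fin n) from rfl] at h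
              linear_combination Cminor h
            · obtain ⟨l, rfl⟩ : ∃ l, j = l + 1 := ⟨j - 1, by omega⟩
              have hne2' : ((⟨l + 1, by omega⟩ : Fin n)) ≠ (⟨0, by omega⟩ : Fin n) := by
                intro h; exact Nat.succ_ne_zero l (congrArg Fin.val h)
              simp only [if_neg hne1, if_neg hne1', if_neg hne2, if_neg hne2', eq_self_iff_true, if_true, true_and, and_true]
              have h := hminP (k + 1) (l + 1) hi hj
              linear_combination Cminor h
        · dsimp only
          simp only [eq_self_iff_true, if_true]
          intro h
          have := congrArg (fun f => Polynomial.coeff f 2) h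
          simp only [Polynomial.coeff_C_mul, Polynomial.coeff_X_pow, eq_self_iff_true,
            if_true, mul_one, Polynomial.coeff_zero] at this
          exact h11 (Ideal.Quotient.eq_zero_iff_mem.mp this)
      · -- Map B : row operation, `x_{1,0} ∉ P`.
        refine no_corner_aux P hP
          (fun p => if p.1 = (⟨0, by omega⟩ : Fin m) then
              Polynomial.C ((Ideal.Quotient.mk P) (X p))
                + Polynomial.C ((Ideal.Quotient.mk P) (X ((⟨1, by omega⟩ : Fin m), p.2))) * Polynomial.X
            else Polynomial.C ((Ideal.Quotient.mk P) (X p))) ?_ ?_ _ ?_ h00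
        · intro p
          by_cases hc : p.1 = (⟨0, by omega⟩ : Fin m)
          · rw [if_pos hc, Polynomial.eval_add, Polynomial.eval_C,
              Polynomial.eval_mul, Polynomial.eval_C, Polynomial.eval_X, mul_zero, add_zero]
          · rw [if_neg hc, Polynomial.eval_C]
        · intro i j hi hj
          dsimp only
          have hne1 : ((⟨i + 1, hi⟩ : Fin m)) ≠ (⟨0, by omega⟩ : Fin m) := by
            intro h; exact Nat.succ_ne_zero i (congrArg Fin.val h)
          rcases Nat.eq_zero_or_pos i with rfl | hipos
          · rw [show ((⟨0 + 1, hi⟩ : Fin m)) = (⟨1, by omega⟩ : Fin m) from rfl] at hne1 ⊢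
            simp only [if_neg hne1, eq_self_iff_true, if_true, true_and, and_true]
            have h := hminP 0 j hi hj
            rw [show ((⟨0 + 1, hi⟩ : Fin m)) = (⟨1, by omega⟩ : Fin m) from rfl] at h
            linear_combination Cminor h
          · obtain ⟨k, rfl⟩ : ∃ k, i = k + 1 := ⟨i - 1, by omega⟩
            have hne1' : ((⟨k + 1, by omega⟩ : Fin m)) ≠ (⟨0, by omega⟩ : Fin m) := by
              intro h; exact Nat.succ_ne_zero k (congrArg Fin.val h)
            simp only [if_neg hne1, if_neg hne1']
            have h := hminP (k + 1) j hi hj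
            linear_combination Cminor h
        · dsimp only
          rw [if_pos rfl]
          intro h
          have := congrArg (fun f => Polynomial.coeff f 1) h
          simp only [Polynomial.coeff_add, Polynomial.coeff_C_mul, Polynomial.coeff_X_one,
            mul_one, Polynomial.coeff_C, if_neg (one_ne_zero), zero_add,
            Polynomial.coeff_zero] at this
          exact h10 (Ideal.Quotient.eq_zero_iff_mem.mp this)
    · -- Map A : column operation, `x_{0,1} ∉ P`.
      refine no_corner_aux P hP
        (fun p => if p.2 = (⟨0, by omega⟩ : Fin n) then
            Polynomial.C ((Ideal.Quotient.mk P) (X p))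
              + Polynomial.C ((Ideal.Quotient.mk P) (X (p.1, (⟨1, by omega⟩ : Fin n)))) * Polynomial.X
          else Polynomial.C ((Ideal.Quotient.mk P) (X p))) ?_ ?_ _ ?_ h00
      · intro p
        by_cases hc : p.2 = (⟨0, by omega⟩ : Fin n)
        · rw [if_pos hc, Polynomial.eval_add, Polynomial.eval_C,
            Polynomial.eval_mul, Polynomial.eval_C, Polynomial.eval_X, mul_zero, add_zero]
        · rw [if_neg hc, Polynomial.eval_C]
      · intro i j hi hj
        dsimp only
        have hne2 : ((⟨j + 1, hj⟩ : Fin n)) ≠ (⟨0, by omega⟩ : Fin n) := by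
          intro h; exact Nat.succ_ne_zero j (congrArg Fin.val h)
        rcases Nat.eq_zero_or_pos j with rfl | hjpos
        · rw [show ((⟨0 + 1, hj⟩ : Fin n)) = (⟨1, by omega⟩ : Fin n) from rfl] at hne2 ⊢
          simp only [if_neg hne2, eq_self_iff_true, if_true, true_and, and_true]
          have h := hminP i 0 hi hj
          rw [show ((⟨0 + 1, hj⟩ : Fin n)) = (⟨1, by omega⟩ : Fin n) from rfl] at h
          linear_combination Cminor h
        · obtain ⟨l, rfl⟩ : ∃ l, j = l + 1 := ⟨j - 1, by omega⟩
          have hne2' : ((⟨l + 1, by omega⟩ : Fin n)) ≠ (⟨0, by omega⟩ : Fin n) := by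
            intro h; exact Nat.succ_ne_zero l (congrArg Fin.val h)
          simp only [if_neg hne2, if_neg hne2']
          have h := hminP i (l + 1) hi hj
          linear_combination Cminor h
      · dsimp only
        rw [if_pos rfl]
        intro h
        have := congrArg (fun f => Polynomial.coeff f 1) h
        simp only [Polynomial.coeff_add, Polynomial.coeff_C_mul, Polynomial.coeff_X_one,
          mul_one, Polynomial.coeff_C, if_neg (one_ne_zero), zero_add,
          Polynomial.coeff_zero] at this
        exact h01 (Ideal.Quotient.eq_zero_iff_mem.mp this)

/-- Transport of minimal primes along an involutive ring endomorphism preserving `I`. -/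
lemma comap_mem_minimalPrimes {R : Type*} [CommRing R] (I : Ideal R)
    (σ : R →+* R) (hinv : ∀ x, σ (σ x) = x) (hmap : ∀ x ∈ I, σ x ∈ I)
    {P : Ideal R} (hP : P ∈ I.minimalPrimes) :
    P.comap σ ∈ I.minimalPrimes := by
  haveI := hP.1.1
  have hIle : I ≤ I.comap σ := fun x hx => hmap x hx
  have hcomap : ∀ Q : Ideal R, (Q.comap σ).comap σ = Q := by
    intro Q
    ext x
    simp only [Ideal.mem_comap, hinv x]
  constructor
  · exact ⟨Ideal.IsPrime.comap σ, le_trans hIle (Ideal.comap_mono hP.1.2)⟩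
  · rintro Q ⟨hQp, hIQ⟩ hQle
    haveI := hQp
    have h1 : I ≤ Q.comap σ := le_trans hIle (Ideal.comap_mono hIQ)
    have h2 : Q.comap σ ≤ P := by
      have h := Ideal.comap_mono (f := σ) hQle
      rwa [hcomap P] at h
    have h3 : P ≤ Q.comap σ := hP.2 ⟨Ideal.IsPrime.comap σ, h1⟩ h2
    intro x hx
    have hσ : σ x ∈ P := hx
    have := h3 hσ
    rw [Ideal.mem_comap, hinv x] at this
    exact this

/-- Column reflection of the grid. -/
def colFlip (m n : ℕ) : Fin m × Fin n → Fin m × Fin n := fun p => (p.1, p.2.rev)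

/-- Row reflection of the grid. -/
def rowFlip (m n : ℕ) : Fin m × Fin n → Fin m × Fin n := fun p => (p.1.rev, p.2)

lemma colFlip_invol {K : Type*} [Field K] {m n : ℕ} (x : MvPolynomial (Fin m × Fin n) K) :
    rename (colFlip m n) (rename (colFlip m n) x) = x := by
  rw [rename_rename,
    show (colFlip m n ∘ colFlip m n) = id from funext fun p => Prod.ext rfl (Fin.rev_rev p.2)]
  exact congrArg (fun f => f x) rename_id

lemma rowFlip_invol {K : Type*} [Field K] {m n : ℕ} (x : MvPolynomial (Fin m × Fin n) K) :
    rename (rowFlip m n) (rename (rowFlip m n) x) = x := by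
  rw [rename_rename,
    show (rowFlip m n ∘ rowFlip m n) = id from funext fun p => Prod.ext (Fin.rev_rev p.1) rfl]
  exact congrArg (fun f => f x) rename_id

lemma colFlip_map_le {K : Type*} [Field K] {m n : ℕ}
    (x : MvPolynomial (Fin m × Fin n) K) (hx : x ∈ adjMinors2Ideal K m n) :
    rename (colFlip m n) x ∈ adjMinors2Ideal K m n := by
  have hle : Ideal.map (rename (colFlip m n)).toRingHom (adjMinors2Ideal K m n)
      ≤ adjMinors2Ideal K m n := by
    rw [adjMinors2Ideal, Ideal.map_span, Ideal.span_le]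
    rintro y ⟨f, ⟨i, j, hi, hj, rfl⟩, rfl⟩
    have hj' : (n - 2 - j) + 1 < n := by omega
    have e1 : (⟨j, by omega⟩ : Fin n).rev = ⟨(n - 2 - j) + 1, by omega⟩ := by
      apply Fin.ext; simp [Fin.val_rev]; omega
    have e2 : (⟨j + 1, hj⟩ : Fin n).rev = ⟨n - 2 - j, by omega⟩ := by
      apply Fin.ext; simp [Fin.val_rev]; omega
    simp only [AlgHom.toRingHom_eq_coe, RingHom.coe_coe, SetLike.mem_coe, map_sub, map_mul,
      rename_X, colFlip, e1, e2]
    have hmem := minor_mem (K := K) i (n - 2 - j) hi hj'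
    rw [show (X ((⟨i, by omega⟩ : Fin m), (⟨(n - 2 - j) + 1, by omega⟩ : Fin n))
          * X ((⟨i + 1, hi⟩ : Fin m), (⟨n - 2 - j, by omega⟩ : Fin n))
        - X ((⟨i, by omega⟩ : Fin m), (⟨n - 2 - j, by omega⟩ : Fin n))
          * X ((⟨i + 1, hi⟩ : Fin m), (⟨(n - 2 - j) + 1, by omega⟩ : Fin n))
        : MvPolynomial (Fin m × Fin n) K)
      = -(X ((⟨i, by omega⟩ : Fin m), (⟨n - 2 - j, by omega⟩ : Fin n))
          * X ((⟨i + 1, hi⟩ : Fin m), (⟨(n - 2 - j) + 1, hj'⟩ : Fin n))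
        - X ((⟨i, by omega⟩ : Fin m), (⟨(n - 2 - j) + 1, hj'⟩ : Fin n))
          * X ((⟨i + 1, hi⟩ : Fin m), (⟨n - 2 - j, by omega⟩ : Fin n))) by ring]
    exact neg_mem hmem
  exact hle (Ideal.mem_map_of_mem _ hx)

lemma rowFlip_map_le {K : Type*} [Field K] {m n : ℕ}
    (x : MvPolynomial (Fin m × Fin n) K) (hx : x ∈ adjMinors2Ideal K m n) :
    rename (rowFlip m n) x ∈ adjMinors2Ideal K m n := by
  have hle : Ideal.map (rename (rowFlip m n)).toRingHom (adjMinors2Ideal K m n)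
      ≤ adjMinors2Ideal K m n := by
    rw [adjMinors2Ideal, Ideal.map_span, Ideal.span_le]
    rintro y ⟨f, ⟨i, j, hi, hj, rfl⟩, rfl⟩
    have hi' : (m - 2 - i) + 1 < m := by omega
    have e1 : (⟨i, by omega⟩ : Fin m).rev = ⟨(m - 2 - i) + 1, by omega⟩ := by
      apply Fin.ext; simp [Fin.val_rev]; omega
    have e2 : (⟨i + 1, hi⟩ : Fin m).rev = ⟨m - 2 - i, by omega⟩ := by
      apply Fin.ext; simp [Fin.val_rev]; omega
    simp only [AlgHom.toRingHom_eq_coe, RingHom.coe_coe, SetLike.mem_coe, map_sub, map_mul,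
      rename_X, rowFlip, e1, e2]
    have hmem := minor_mem (K := K) (m - 2 - i) j hi' hj
    rw [show (X ((⟨(m - 2 - i) + 1, by omega⟩ : Fin m), (⟨j, by omega⟩ : Fin n))
          * X ((⟨m - 2 - i, by omega⟩ : Fin m), (⟨j + 1, hj⟩ : Fin n))
        - X ((⟨(m - 2 - i) + 1, by omega⟩ : Fin m), (⟨j + 1, hj⟩ : Fin n))
          * X ((⟨m - 2 - i, by omega⟩ : Fin m), (⟨j, by omega⟩ : Fin n))
        : MvPolynomial (Fin m × Fin n) K)
      = -(X ((⟨m - 2 - i, by omega⟩ : Fin m), (⟨j, by omega⟩ : Fin n))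
          * X ((⟨(m - 2 - i) + 1, hi'⟩ : Fin m), (⟨j + 1, hj⟩ : Fin n))
        - X ((⟨m - 2 - i, by omega⟩ : Fin m), (⟨j + 1, hj⟩ : Fin n))
          * X ((⟨(m - 2 - i) + 1, hi'⟩ : Fin m), (⟨j, by omega⟩ : Fin n))) by ring]
    exact neg_mem hmem
  exact hle (Ideal.mem_map_of_mem _ hx)

set_option maxHeartbeats 2000000

/-- no corner variable belongs to a minimal prime of the ideal of
adjacent 2×2 minors. -/
theorem corner_vars_not_mem_minimal_prime
    (K : Type*) [Field K] (m n : ℕ) (hm : 2 ≤ m) (hn : 2 ≤ n)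
    (P : Ideal (MvPolynomial (Fin m × Fin n) K))
    (hP : P ∈ (adjMinors2Ideal K m n).minimalPrimes) :
    X ((⟨0, by omega⟩ : Fin m), (⟨0, by omega⟩ : Fin n)) ∉ P ∧
    X ((⟨0, by omega⟩ : Fin m), (⟨n - 1, by omega⟩ : Fin n)) ∉ P ∧
    X ((⟨m - 1, by omega⟩ : Fin m), (⟨0, by omega⟩ : Fin n)) ∉ P ∧
    X ((⟨m - 1, by omega⟩ : Fin m), (⟨n - 1, by omega⟩ : Fin n)) ∉ P := by
  have hPc : P.comap ((rename (colFlip m n)).toRingHom :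
      MvPolynomial (Fin m × Fin n) K →+* _) ∈ (adjMinors2Ideal K m n).minimalPrimes :=
    comap_mem_minimalPrimes _ _ (fun x => colFlip_invol x) (fun x hx => colFlip_map_le x hx) hP
  have hPr : P.comap ((rename (rowFlip m n)).toRingHom :
      MvPolynomial (Fin m × Fin n) K →+* _) ∈ (adjMinors2Ideal K m n).minimalPrimes :=
    comap_mem_minimalPrimes _ _ (fun x => rowFlip_invol x) (fun x hx => rowFlip_map_le x hx) hP
  have hPrc : (P.comap ((rename (colFlip m n)).toRingHom :
      MvPolynomial (Fin m × Fin n) K →+* _)).comap ((rename (rowFlip m n)).toRingHom :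
      MvPolynomial (Fin m × Fin n) K →+* _) ∈ (adjMinors2Ideal K m n).minimalPrimes :=
    comap_mem_minimalPrimes _ _ (fun x => rowFlip_invol x) (fun x hx => rowFlip_map_le x hx) hPc
  have erev : (⟨0, by omega⟩ : Fin n).rev = (⟨n - 1, by omega⟩ : Fin n) := by
    apply Fin.ext; simp [Fin.val_rev]
  have erevm : (⟨0, by omega⟩ : Fin m).rev = (⟨m - 1, by omega⟩ : Fin m) := by
    apply Fin.ext; simp [Fin.val_rev]
  refine ⟨corner00 hm hn P hP, ?_, ?_, ?_⟩
  · intro hmem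
    refine corner00 hm hn _ hPc ?_
    rw [Ideal.mem_comap]
    simp only [AlgHom.toRingHom_eq_coe, RingHom.coe_coe, rename_X]
    rw [show colFlip m n ((⟨0, by omega⟩ : Fin m), (⟨0, by omega⟩ : Fin n))
        = ((⟨0, by omega⟩ : Fin m), (⟨n - 1, by omega⟩ : Fin n)) from Prod.ext rfl erev]
    exact hmem
  · intro hmem
    refine corner00 hm hn _ hPr ?_
    rw [Ideal.mem_comap]
    simp only [AlgHom.toRingHom_eq_coe, RingHom.coe_coe, rename_X]
    rw [show rowFlip m n ((⟨0, by omega⟩ : Fin m), (⟨0, by omega⟩ : Fin n))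
        = ((⟨m - 1, by omega⟩ : Fin m), (⟨0, by omega⟩ : Fin n)) from Prod.ext erevm rfl]
    exact hmem
  · intro hmem
    refine corner00 hm hn _ hPrc ?_
    rw [Ideal.mem_comap, Ideal.mem_comap]
    simp only [AlgHom.toRingHom_eq_coe, RingHom.coe_coe, rename_X]
    rw [show colFlip m n (rowFlip m n ((⟨0, by omega⟩ : Fin m), (⟨0, by omega⟩ : Fin n)))
        = ((⟨m - 1, by omega⟩ : Fin m), (⟨n - 1, by omega⟩ : Fin n)) from Prod.ext erevm erev]
    exact hmem
end

section
/- Let P be a minimal prime ideal of I_mn(2), and let N_P be the set of grid positions (i,j) with x_{ij} ∉ P. Then every connected component of N_P (under the adjacency in which (i,j) and (s,t) are adjacent when |i−s| ≤ 1 and |j−t| ≤ 1) is a rectangle, i.e., a set of the form {i,…,s}×{j,…,t}. -/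
open MvPolynomial

/-- Two grid positions are adjacent if their coordinates differ by at most 1. -/
def gridAdj {m n : ℕ} (p q : Fin m × Fin n) : Prop :=
  p.1.1 ≤ q.1.1 + 1 ∧ q.1.1 ≤ p.1.1 + 1 ∧ p.2.1 ≤ q.2.1 + 1 ∧ q.2.1 ≤ p.2.1 + 1

/-- A set of grid positions is connected if any two of its elements are joined by a
path inside the set whose consecutive positions are adjacent. -/
def ConnectedIn {m n : ℕ} (A : Set (Fin m × Fin n)) : Prop :=
  ∀ p ∈ A, ∀ q ∈ A,
    Relation.ReflTransGen (fun x y => gridAdj x y ∧ x ∈ A ∧ y ∈ A) p q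

/-- `T` is a connected component of `N`: a maximal connected subset. -/
def IsComponent {m n : ℕ} (N T : Set (Fin m × Fin n)) : Prop :=
  T.Nonempty ∧ T ⊆ N ∧ ConnectedIn T ∧
    ∀ T', T ⊆ T' → T' ⊆ N → ConnectedIn T' → T' = T

/-- A rectangle of grid positions. -/
def IsRect {m n : ℕ} (T : Set (Fin m × Fin n)) : Prop :=
  ∃ i s j t : ℕ,
    T = {p : Fin m × Fin n | i ≤ p.1.1 ∧ p.1.1 ≤ s ∧ j ≤ p.2.1 ∧ p.2.1 ≤ t}

/-- The boundary of a set of grid positions: positions outside of it that are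
adjacent to some position in it. -/
def gridBdry {m n : ℕ} (T : Set (Fin m × Fin n)) : Set (Fin m × Fin n) :=
  {p | p ∉ T ∧ ∃ q ∈ T, gridAdj p q}

/-- The set of positions whose variable lies in `P`. -/
def SP {K : Type*} [Field K] {m n : ℕ} (P : Ideal (MvPolynomial (Fin m × Fin n) K)) :
    Set (Fin m × Fin n) := {p | X p ∈ P}

/-- The set of positions whose variable does not lie in `P`. -/
def NP {K : Type*} [Field K] {m n : ℕ} (P : Ideal (MvPolynomial (Fin m × Fin n) K)) :
    Set (Fin m × Fin n) := {p | X p ∉ P}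



namespace RectAux

variable {m n : ℕ}

def Star (M : ℕ → ℕ → Prop) : Prop :=
  ∀ a b : ℕ, (M a b → M (a+1) (b+1) → M a (b+1) ∧ M (a+1) b) ∧
    (M a (b+1) → M (a+1) b → M a b ∧ M (a+1) (b+1))

theorem Star.flip {M : ℕ → ℕ → Prop} (h : Star M) : Star (fun a b => M b a) := by
  intro a b
  refine ⟨fun h1 h2 => ?_, fun h1 h2 => ?_⟩
  · obtain ⟨u, v⟩ := (h b a).1 h1 h2
    exact ⟨v, u⟩
  · obtain ⟨u, v⟩ := (h b a).2 h2 h1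
    exact ⟨u, v⟩

def RowFull (M : ℕ → ℕ → Prop) (a c1 c2 : ℕ) : Prop :=
  ∀ c, c1 ≤ c → c ≤ c2 → M a c

def RectM (M : ℕ → ℕ → Prop) (r1 r2 c1 c2 : ℕ) : Prop :=
  ∀ a b, r1 ≤ a → a ≤ r2 → c1 ≤ b → b ≤ c2 → M a b

theorem prop_right_down {M} (hS : Star M) {a c1 c2 b : ℕ}
    (hrow : RowFull M a c1 c2) (hb : M (a+1) b) (h1 : c1 ≤ b) :
    ∀ d, b ≤ d → d ≤ c2 → M (a+1) d := by
  intro d hd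
  induction d, hd using Nat.le_induction with
  | base => intro _; exact hb
  | succ d hd ih =>
    intro h2
    exact ((hS a d).2 (hrow (d+1) (by omega) h2) (ih (by omega))).2

theorem prop_left_down {M} (hS : Star M) {a c1 c2 b : ℕ}
    (hrow : RowFull M a c1 c2) (hb : M (a+1) b) (h2 : b ≤ c2) :
    ∀ d, c1 ≤ d → d ≤ b → M (a+1) d := by
  suffices h : ∀ k d, d + k = b → c1 ≤ d → M (a+1) d by
    intro d h1 hdb
    obtain ⟨k, hk⟩ := Nat.le.dest hdb
    exact h k d hk h1
  intro k
  induction k with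
  | zero =>
    intro d hdk _
    have : d = b := by omega
    subst this; exact hb
  | succ k ih =>
    intro d hdk h1
    have hd1 : M (a+1) (d+1) := ih (d+1) (by omega) (by omega)
    exact ((hS a d).1 (hrow d h1 (by omega)) hd1).2

theorem prop_right_up {M} (hS : Star M) {a c1 c2 b : ℕ}
    (hrow : RowFull M (a+1) c1 c2) (hb : M a b) (h1 : c1 ≤ b) :
    ∀ d, b ≤ d → d ≤ c2 → M a d := by
  intro d hd
  induction d, hd using Nat.le_induction with
  | base => intro _; exact hb
  | succ d hd ih =>
    intro h2
    exact ((hS a d).1 (ih (by omega)) (hrow (d+1) (by omega) h2)).1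

theorem prop_left_up {M} (hS : Star M) {a c1 c2 b : ℕ}
    (hrow : RowFull M (a+1) c1 c2) (hb : M a b) (h2 : b ≤ c2) :
    ∀ d, c1 ≤ d → d ≤ b → M a d := by
  suffices h : ∀ k d, d + k = b → c1 ≤ d → M a d by
    intro d h1 hdb
    obtain ⟨k, hk⟩ := Nat.le.dest hdb
    exact h k d hk h1
  intro k
  induction k with
  | zero =>
    intro d hdk _
    have : d = b := by omega
    subst this; exact hb
  | succ k ih =>
    intro d hdk h1
    have hd1 : M a (d+1) := ih (d+1) (by omega) (by omega)
    exact ((hS a d).2 hd1 (hrow d h1 (by omega))).1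

theorem row_extend_down {M} (hS : Star M) {a c1 c2 b : ℕ}
    (hrow : RowFull M a c1 c2) (hcc : c1 ≤ c2)
    (hb : M (a+1) b) (hb1 : c1 ≤ b+1) (hb2 : b ≤ c2+1) :
    RowFull M a (min c1 b) (max c2 b) ∧ RowFull M (a+1) (min c1 b) (max c2 b) := by
  by_cases hcase1 : b ≤ c2
  · by_cases hcase2 : c1 ≤ b
    · refine ⟨fun c h1 h2 => hrow c (by omega) (by omega), fun c h1 h2 => ?_⟩
      rcases le_or_gt c b with h | h
      · exact prop_left_down hS hrow hb hcase1 c (by omega) h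
      · exact prop_right_down hS hrow hb hcase2 c (by omega) (by omega)
    · have hkey := (hS a b).2 (hrow (b+1) (by omega) (by omega)) hb
      have hrow' : RowFull M a b c2 := by
        intro c h1 h2
        rcases eq_or_lt_of_le h1 with h | h
        · rw [← h]; exact hkey.1
        · exact hrow c (by omega) h2
      refine ⟨fun c h1 h2 => hrow' c (by omega) (by omega), fun c h1 h2 => ?_⟩
      exact prop_right_down hS hrow' hb le_rfl c (by omega) (by omega)
  · have hb2' : b = c2 + 1 := by omega
    subst hb2'
    have hkey := (hS a c2).1 (hrow c2 hcc le_rfl) hb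
    have hrow' : RowFull M a c1 (c2+1) := by
      intro c h1 h2
      rcases eq_or_lt_of_le h2 with h | h
      · rw [h]; exact hkey.1
      · exact hrow c h1 (by omega)
    refine ⟨fun c h1 h2 => hrow' c (by omega) (by omega), fun c h1 h2 => ?_⟩
    exact prop_left_down hS hrow' hb le_rfl c (by omega) (by omega)

theorem row_extend_up {M} (hS : Star M) {a c1 c2 b : ℕ}
    (hrow : RowFull M (a+1) c1 c2) (hcc : c1 ≤ c2)
    (hb : M a b) (hb1 : c1 ≤ b+1) (hb2 : b ≤ c2+1) :
    RowFull M a (min c1 b) (max c2 b) ∧ RowFull M (a+1) (min c1 b) (max c2 b) := by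
  by_cases hcase1 : b ≤ c2
  · by_cases hcase2 : c1 ≤ b
    · refine ⟨fun c h1 h2 => ?_, fun c h1 h2 => hrow c (by omega) (by omega)⟩
      rcases le_or_gt c b with h | h
      · exact prop_left_up hS hrow hb hcase1 c (by omega) h
      · exact prop_right_up hS hrow hb hcase2 c (by omega) (by omega)
    · have hkey := (hS a b).1 hb (hrow (b+1) (by omega) (by omega))
      have hrow' : RowFull M (a+1) b c2 := by
        intro c h1 h2
        rcases eq_or_lt_of_le h1 with h | h
        · rw [← h]; exact hkey.2
        · exact hrow c (by omega) h2
      refine ⟨fun c h1 h2 => ?_, fun c h1 h2 => hrow' c (by omega) (by omega)⟩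
      exact prop_right_up hS hrow' hb le_rfl c (by omega) (by omega)
  · have hb2' : b = c2 + 1 := by omega
    subst hb2'
    have hkey := (hS a c2).2 hb (hrow c2 hcc le_rfl)
    have hrow' : RowFull M (a+1) c1 (c2+1) := by
      intro c h1 h2
      rcases eq_or_lt_of_le h2 with h | h
      · rw [h]; exact hkey.2
      · exact hrow c h1 (by omega)
    refine ⟨fun c h1 h2 => ?_, fun c h1 h2 => hrow' c (by omega) (by omega)⟩
    exact prop_left_up hS hrow' hb le_rfl c (by omega) (by omega)

theorem rect_extend {M} (hS : Star M) {r1 r2 c1 c2 a b : ℕ}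
    (hR : RectM M r1 r2 c1 c2) (hr : r1 ≤ r2) (hc : c1 ≤ c2)
    (hM : M a b) (ha1 : r1 ≤ a+1) (ha2 : a ≤ r2+1) (hb1 : c1 ≤ b+1) (hb2 : b ≤ c2+1) :
    RectM M (min r1 a) (max r2 a) (min c1 b) (max c2 b) := by
  have colFull : ∀ c, c1 ≤ c → c ≤ c2 → RowFull (fun x y => M y x) c r1 r2 :=
    fun c hc1 hc2 r h1 h2 => hR r c h1 h2 hc1 hc2
  by_cases hcaseA : r1 ≤ a ∧ a ≤ r2
  · obtain ⟨hA1, hA2⟩ := hcaseA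
    by_cases hcb1 : b ≤ c2
    · by_cases hcb2 : c1 ≤ b
      · intro x y u1 u2 u3 u4
        exact hR x y (by omega) (by omega) (by omega) (by omega)
      · -- b + 1 = c1 : extend column to the left
        have hb1' : b + 1 = c1 := by omega
        have hext := row_extend_up hS.flip (by rw [hb1']; exact colFull c1 le_rfl hc) hr
          (show (fun x y => M y x) b a from hM) (by omega) (by omega)
        intro x y u1 u2 u3 u4
        rcases le_or_gt c1 y with h | h
        · exact hR x y (by omega) (by omega) (by omega) (by omega)
        · rw [show y = b by omega]
          exact hext.1 x (by omega) (by omega)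
    · -- b = c2 + 1 : extend column to the right
      have hb2' : b = c2 + 1 := by omega
      subst hb2'
      have hext := row_extend_down hS.flip (colFull c2 hc le_rfl) hr
        (show (fun x y => M y x) (c2+1) a from hM) (by omega) (by omega)
      intro x y u1 u2 u3 u4
      rcases le_or_gt y c2 with h | h
      · exact hR x y (by omega) (by omega) (by omega) (by omega)
      · rw [show y = c2 + 1 by omega]
        exact hext.2 x (by omega) (by omega)
  · by_cases hcaseB : r2 < a
    · -- a = r2 + 1
      have ha' : a = r2 + 1 := by omega
      subst ha'
      have hrow : RowFull M r2 c1 c2 := fun c h1 h2 => hR r2 c hr le_rfl h1 h2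
      have hext := row_extend_down hS hrow hc hM hb1 hb2
      by_cases hcb1 : b ≤ c2
      · by_cases hcb2 : c1 ≤ b
        · intro x y u1 u2 u3 u4
          rcases le_or_gt x r2 with h | h
          · exact hR x y (by omega) (by omega) (by omega) (by omega)
          · rw [show x = r2 + 1 by omega]
            exact hext.2 y (by omega) (by omega)
        · -- b + 1 = c1
          have hb1' : b + 1 = c1 := by omega
          have hseed : M r2 b := hext.1 b (by omega) (by omega)
          have hcol := row_extend_up hS.flip (by rw [hb1']; exact colFull c1 le_rfl hc) hr
            (show (fun x y => M y x) b r2 from hseed) (by omega) (by omega)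
          intro x y u1 u2 u3 u4
          rcases le_or_gt x r2 with h | h
          · rcases le_or_gt c1 y with h' | h'
            · exact hR x y (by omega) (by omega) (by omega) (by omega)
            · rw [show y = b by omega]
              exact hcol.1 x (by omega) (by omega)
          · rw [show x = r2 + 1 by omega]
            exact hext.2 y (by omega) (by omega)
      · -- b = c2 + 1
        have hb2' : b = c2 + 1 := by omega
        subst hb2'
        have hseed : M r2 (c2+1) := hext.1 (c2+1) (by omega) (by omega)
        have hcol := row_extend_down hS.flip (colFull c2 hc le_rfl) hr
          (show (fun x y => M y x) (c2+1) r2 from hseed) (by omega) (by omega)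
        intro x y u1 u2 u3 u4
        rcases le_or_gt x r2 with h | h
        · rcases le_or_gt y c2 with h' | h'
          · exact hR x y (by omega) (by omega) (by omega) (by omega)
          · rw [show y = c2 + 1 by omega]
            exact hcol.2 x (by omega) (by omega)
        · rw [show x = r2 + 1 by omega]
          exact hext.2 y (by omega) (by omega)
    · -- a + 1 = r1
      have ha' : a + 1 = r1 := by omega
      have hrow : RowFull M r1 c1 c2 := fun c h1 h2 => hR r1 c le_rfl hr h1 h2
      have hext := row_extend_up hS (by rw [ha']; exact hrow) hc hM hb1 hb2
      by_cases hcb1 : b ≤ c2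
      · by_cases hcb2 : c1 ≤ b
        · intro x y u1 u2 u3 u4
          rcases le_or_gt x a with h | h
          · rw [show x = a by omega]
            exact hext.1 y (by omega) (by omega)
          · exact hR x y (by omega) (by omega) (by omega) (by omega)
        · have hb1' : b + 1 = c1 := by omega
          have hseed : M r1 b := by
            have := hext.2 b (by omega) (by omega)
            rwa [ha'] at this
          have hcol := row_extend_up hS.flip (by rw [hb1']; exact colFull c1 le_rfl hc) hr
            (show (fun x y => M y x) b r1 from hseed) (by omega) (by omega)
          intro x y u1 u2 u3 u4
          rcases le_or_gt x a with h | h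
          · rw [show x = a by omega]
            exact hext.1 y (by omega) (by omega)
          · rcases le_or_gt c1 y with h' | h'
            · exact hR x y (by omega) (by omega) (by omega) (by omega)
            · rw [show y = b by omega]
              exact hcol.1 x (by omega) (by omega)
      · have hb2' : b = c2 + 1 := by omega
        subst hb2'
        have hseed : M r1 (c2+1) := by
          have := hext.2 (c2+1) (by omega) (by omega)
          rwa [ha'] at this
        have hcol := row_extend_down hS.flip (colFull c2 hc le_rfl) hr
          (show (fun x y => M y x) (c2+1) r1 from hseed) (by omega) (by omega)
        intro x y u1 u2 u3 u4
        rcases le_or_gt x a with h | h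
        · rw [show x = a by omega]
          exact hext.1 y (by omega) (by omega)
        · rcases le_or_gt y c2 with h' | h'
          · exact hR x y (by omega) (by omega) (by omega) (by omega)
          · rw [show y = c2 + 1 by omega]
            exact hcol.2 x (by omega) (by omega)

def RSet (m n : ℕ) (r1 r2 c1 c2 : ℕ) : Set (Fin m × Fin n) :=
  {p | r1 ≤ p.1.1 ∧ p.1.1 ≤ r2 ∧ c1 ≤ p.2.1 ∧ p.2.1 ≤ c2}

theorem gridAdj_symm {p q : Fin m × Fin n} (h : gridAdj p q) : gridAdj q p :=
  ⟨h.2.1, h.1, h.2.2.2, h.2.2.1⟩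

theorem rel_symm {A : Set (Fin m × Fin n)} :
    Symmetric (fun x y : Fin m × Fin n => gridAdj x y ∧ x ∈ A ∧ y ∈ A) :=
  fun _ _ h => ⟨gridAdj_symm h.1, h.2.2, h.2.1⟩

theorem rset_conn_row {r1 r2 c1 c2 : ℕ} :
    ∀ (k : ℕ) (p q : Fin m × Fin n), p ∈ RSet m n r1 r2 c1 c2 → q ∈ RSet m n r1 r2 c1 c2 →
      p.1 = q.1 → p.2.1 + k = q.2.1 →
      Relation.ReflTransGen
        (fun x y => gridAdj x y ∧ x ∈ RSet m n r1 r2 c1 c2 ∧ y ∈ RSet m n r1 r2 c1 c2) p q := by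
  intro k
  induction k with
  | zero =>
    intro p q hp hq h1 h2
    have : p = q := Prod.ext h1 (Fin.ext (by omega))
    rw [this]
  | succ k ih =>
    intro p q hp hq h1 h2
    have hlt : p.2.1 + 1 < n := by have := q.2.isLt; omega
    have hp'mem : ((p.1, ⟨p.2.1 + 1, hlt⟩) : Fin m × Fin n) ∈ RSet m n r1 r2 c1 c2 := by
      refine ⟨hp.1, hp.2.1, ?_, ?_⟩
      · have := hp.2.2.1; simp only []; omega
      · have := hq.2.2.2; simp only []; omega
    have hadj : gridAdj p ((p.1, ⟨p.2.1 + 1, hlt⟩) : Fin m × Fin n) := by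
      refine ⟨?_, ?_, ?_, ?_⟩ <;> simp <;> omega
    exact Relation.ReflTransGen.head ⟨hadj, hp, hp'mem⟩
      (ih _ q hp'mem hq h1 (by simp; omega))

theorem rset_conn_col {r1 r2 c1 c2 : ℕ} :
    ∀ (k : ℕ) (p q : Fin m × Fin n), p ∈ RSet m n r1 r2 c1 c2 → q ∈ RSet m n r1 r2 c1 c2 →
      p.2 = q.2 → p.1.1 + k = q.1.1 →
      Relation.ReflTransGen
        (fun x y => gridAdj x y ∧ x ∈ RSet m n r1 r2 c1 c2 ∧ y ∈ RSet m n r1 r2 c1 c2) p q := by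
  intro k
  induction k with
  | zero =>
    intro p q hp hq h1 h2
    have : p = q := Prod.ext (Fin.ext (by omega)) h1
    rw [this]
  | succ k ih =>
    intro p q hp hq h1 h2
    have hlt : p.1.1 + 1 < m := by have := q.1.isLt; omega
    have hp'mem : ((⟨p.1.1 + 1, hlt⟩, p.2) : Fin m × Fin n) ∈ RSet m n r1 r2 c1 c2 := by
      refine ⟨?_, ?_, hp.2.2.1, hp.2.2.2⟩
      · have := hp.1; simp only []; omega
      · have := hq.2.1; simp only []; omega
    have hadj : gridAdj p ((⟨p.1.1 + 1, hlt⟩, p.2) : Fin m × Fin n) := by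
      refine ⟨?_, ?_, ?_, ?_⟩ <;> simp <;> omega
    exact Relation.ReflTransGen.head ⟨hadj, hp, hp'mem⟩
      (ih _ q hp'mem hq h1 (by simp; omega))

theorem rset_conn {r1 r2 c1 c2 : ℕ} (p q : Fin m × Fin n)
    (hp : p ∈ RSet m n r1 r2 c1 c2) (hq : q ∈ RSet m n r1 r2 c1 c2) :
    Relation.ReflTransGen
      (fun x y => gridAdj x y ∧ x ∈ RSet m n r1 r2 c1 c2 ∧ y ∈ RSet m n r1 r2 c1 c2) p q := by
  have hmid : ((p.1, q.2) : Fin m × Fin n) ∈ RSet m n r1 r2 c1 c2 :=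
    ⟨hp.1, hp.2.1, hq.2.2.1, hq.2.2.2⟩
  have leg1 : Relation.ReflTransGen
      (fun x y => gridAdj x y ∧ x ∈ RSet m n r1 r2 c1 c2 ∧ y ∈ RSet m n r1 r2 c1 c2)
      p ((p.1, q.2) : Fin m × Fin n) := by
    rcases le_total p.2.1 q.2.1 with h | h
    · obtain ⟨k, hk⟩ := Nat.le.dest h
      exact rset_conn_row k p _ hp hmid rfl hk
    · obtain ⟨k, hk⟩ := Nat.le.dest h
      exact (@Relation.ReflTransGen.stdSymm _ _ ⟨rel_symm⟩).symm _ _ (rset_conn_row k _ p hmid hp rfl hk)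
  have leg2 : Relation.ReflTransGen
      (fun x y => gridAdj x y ∧ x ∈ RSet m n r1 r2 c1 c2 ∧ y ∈ RSet m n r1 r2 c1 c2)
      ((p.1, q.2) : Fin m × Fin n) q := by
    rcases le_total p.1.1 q.1.1 with h | h
    · obtain ⟨k, hk⟩ := Nat.le.dest h
      exact rset_conn_col k _ q hmid hq rfl hk
    · obtain ⟨k, hk⟩ := Nat.le.dest h
      exact (@Relation.ReflTransGen.stdSymm _ _ ⟨rel_symm⟩).symm _ _ (rset_conn_col k q _ hq hmid rfl hk)
  exact leg1.trans leg2

theorem rset_subset_component {N T : Set (Fin m × Fin n)} (hT : IsComponent N T)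
    {r1 r2 c1 c2 : ℕ} (hRN : RSet m n r1 r2 c1 c2 ⊆ N)
    {p0 : Fin m × Fin n} (hp0T : p0 ∈ T) (hp0R : p0 ∈ RSet m n r1 r2 c1 c2) :
    RSet m n r1 r2 c1 c2 ⊆ T := by
  have hsub : T ∪ RSet m n r1 r2 c1 c2 ⊆ N := Set.union_subset hT.2.1 hRN
  have hbridge : ∀ z ∈ T ∪ RSet m n r1 r2 c1 c2,
      Relation.ReflTransGen (fun x y => gridAdj x y ∧ x ∈ T ∪ RSet m n r1 r2 c1 c2 ∧
        y ∈ T ∪ RSet m n r1 r2 c1 c2) z p0 := by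
    intro z hz
    rcases hz with hz | hz
    · exact Relation.ReflTransGen.mono (p := fun x y => gridAdj x y ∧ x ∈ T ∪ RSet m n r1 r2 c1 c2 ∧ y ∈ T ∪ RSet m n r1 r2 c1 c2) (fun x y h => ⟨h.1, Or.inl h.2.1, Or.inl h.2.2⟩)
        _ _ (hT.2.2.1 z hz p0 hp0T)
    · exact Relation.ReflTransGen.mono (p := fun x y => gridAdj x y ∧ x ∈ T ∪ RSet m n r1 r2 c1 c2 ∧ y ∈ T ∪ RSet m n r1 r2 c1 c2) (fun x y h => ⟨h.1, Or.inr h.2.1, Or.inr h.2.2⟩)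
        _ _ (rset_conn z p0 hz hp0R)
  have hconn : ConnectedIn (T ∪ RSet m n r1 r2 c1 c2) := by
    intro x hx y hy
    exact (hbridge x hx).trans ((@Relation.ReflTransGen.stdSymm _ _ ⟨rel_symm⟩).symm _ _ (hbridge y hy))
  have heq := hT.2.2.2 _ Set.subset_union_left hsub hconn
  intro x hx
  rw [← heq]
  exact Or.inr hx

theorem star_of_minimalPrime {K : Type*} [Field K] {m n : ℕ}
    {P : Ideal (MvPolynomial (Fin m × Fin n) K)}
    (hP : P ∈ (adjMinors2Ideal K m n).minimalPrimes) :
    Star (fun a b => ∃ (ha : a < m) (hb : b < n),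
      ((⟨a, ha⟩, ⟨b, hb⟩) : Fin m × Fin n) ∈ NP P) := by
  have hPrime : P.IsPrime := hP.1.1
  have hle : adjMinors2Ideal K m n ≤ P := hP.1.2
  have minor_mem : ∀ (a b : ℕ) (ha : a + 1 < m) (hb : b + 1 < n),
      (X (⟨a, by omega⟩, ⟨b, by omega⟩) * X (⟨a + 1, ha⟩, ⟨b + 1, hb⟩)
        - X (⟨a, by omega⟩, ⟨b + 1, hb⟩) * X (⟨a + 1, ha⟩, ⟨b, by omega⟩)
        : MvPolynomial (Fin m × Fin n) K) ∈ P :=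
    fun a b ha hb => hle (Ideal.subset_span ⟨a, b, ha, hb, rfl⟩)
  have hmul : ∀ (a b : ℕ) (ha : a + 1 < m) (hb : b + 1 < n),
      ((X (⟨a, by omega⟩, ⟨b, by omega⟩) * X (⟨a + 1, ha⟩, ⟨b + 1, hb⟩)
        : MvPolynomial (Fin m × Fin n) K) ∈ P ↔
       (X (⟨a, by omega⟩, ⟨b + 1, hb⟩) * X (⟨a + 1, ha⟩, ⟨b, by omega⟩)
        : MvPolynomial (Fin m × Fin n) K) ∈ P) := by
    intro a b ha hb
    constructor
    · intro h
      have h2 : (X (⟨a, by omega⟩, ⟨b + 1, hb⟩) * X (⟨a + 1, ha⟩, ⟨b, by omega⟩)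
          : MvPolynomial (Fin m × Fin n) K)
          = X (⟨a, by omega⟩, ⟨b, by omega⟩) * X (⟨a + 1, ha⟩, ⟨b + 1, hb⟩)
            - (X (⟨a, by omega⟩, ⟨b, by omega⟩) * X (⟨a + 1, ha⟩, ⟨b + 1, hb⟩)
              - X (⟨a, by omega⟩, ⟨b + 1, hb⟩) * X (⟨a + 1, ha⟩, ⟨b, by omega⟩)) := by ring
      rw [h2]
      exact P.sub_mem h (minor_mem a b ha hb)
    · intro h
      have h2 : (X (⟨a, by omega⟩, ⟨b, by omega⟩) * X (⟨a + 1, ha⟩, ⟨b + 1, hb⟩)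
          : MvPolynomial (Fin m × Fin n) K)
          = (X (⟨a, by omega⟩, ⟨b, by omega⟩) * X (⟨a + 1, ha⟩, ⟨b + 1, hb⟩)
              - X (⟨a, by omega⟩, ⟨b + 1, hb⟩) * X (⟨a + 1, ha⟩, ⟨b, by omega⟩))
            + X (⟨a, by omega⟩, ⟨b + 1, hb⟩) * X (⟨a + 1, ha⟩, ⟨b, by omega⟩) := by ring
      rw [h2]
      exact P.add_mem (minor_mem a b ha hb) h
  intro a b
  constructor
  · rintro ⟨ha, hb, hx1⟩ ⟨ha', hb', hx4⟩
    refine ⟨⟨ha, hb', fun hmem => ?_⟩, ⟨ha', hb, fun hmem => ?_⟩⟩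
    · have hp : (X (⟨a, by omega⟩, ⟨b + 1, hb'⟩) * X (⟨a + 1, ha'⟩, ⟨b, by omega⟩)
          : MvPolynomial (Fin m × Fin n) K) ∈ P := Ideal.mul_mem_right _ _ hmem
      rcases hPrime.mem_or_mem ((hmul a b ha' hb').mpr hp) with h | h
      · exact hx1 h
      · exact hx4 h
    · have hp : (X (⟨a, by omega⟩, ⟨b + 1, hb'⟩) * X (⟨a + 1, ha'⟩, ⟨b, by omega⟩)
          : MvPolynomial (Fin m × Fin n) K) ∈ P := Ideal.mul_mem_left _ _ hmem
      rcases hPrime.mem_or_mem ((hmul a b ha' hb').mpr hp) with h | h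
      · exact hx1 h
      · exact hx4 h
  · rintro ⟨ha, hb', hx2⟩ ⟨ha', hb, hx3⟩
    refine ⟨⟨ha, hb, fun hmem => ?_⟩, ⟨ha', hb', fun hmem => ?_⟩⟩
    · have hp : (X (⟨a, by omega⟩, ⟨b, by omega⟩) * X (⟨a + 1, ha'⟩, ⟨b + 1, hb'⟩)
          : MvPolynomial (Fin m × Fin n) K) ∈ P := Ideal.mul_mem_right _ _ hmem
      rcases hPrime.mem_or_mem ((hmul a b ha' hb').mp hp) with h | h
      · exact hx2 h
      · exact hx3 h
    · have hp : (X (⟨a, by omega⟩, ⟨b, by omega⟩) * X (⟨a + 1, ha'⟩, ⟨b + 1, hb'⟩)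
          : MvPolynomial (Fin m × Fin n) K) ∈ P := Ideal.mul_mem_left _ _ hmem
      rcases hPrime.mem_or_mem ((hmul a b ha' hb').mp hp) with h | h
      · exact hx2 h
      · exact hx3 h


end RectAux

/-- every connected component of `N_P` is a rectangle, for `P` a
minimal prime of the ideal of adjacent 2×2 minors. -/
theorem component_of_NP_isRect
    (K : Type*) [Field K] (m n : ℕ) (hm : 2 ≤ m) (hn : 2 ≤ n)
    (P : Ideal (MvPolynomial (Fin m × Fin n) K))
    (hP : P ∈ (adjMinors2Ideal K m n).minimalPrimes)
    (T : Set (Fin m × Fin n)) (hT : IsComponent (NP P) T) :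
    IsRect T := by
  classical
  set M : ℕ → ℕ → Prop := fun a b => ∃ (ha : a < m) (hb : b < n),
      ((⟨a, ha⟩, ⟨b, hb⟩) : Fin m × Fin n) ∈ NP P with hMdef
  have hS : RectAux.Star M := RectAux.star_of_minimalPrime hP
  have hTN : T ⊆ NP P := hT.2.1
  have hmemM : ∀ x : Fin m × Fin n, x ∈ NP P → M x.1.1 x.2.1 :=
    fun x hx => ⟨x.1.isLt, x.2.isLt, hx⟩
  have hMN : ∀ x : Fin m × Fin n, M x.1.1 x.2.1 → x ∈ NP P := by
    rintro x ⟨ha, hb, h⟩; exact h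
  have key : ∀ p ∈ T, ∀ q ∈ T, ∃ r1 r2 c1 c2, RectAux.RectM M r1 r2 c1 c2 ∧
      r1 ≤ p.1.1 ∧ p.1.1 ≤ r2 ∧ c1 ≤ p.2.1 ∧ p.2.1 ≤ c2 ∧
      r1 ≤ q.1.1 ∧ q.1.1 ≤ r2 ∧ c1 ≤ q.2.1 ∧ q.2.1 ≤ c2 := by
    intro p hp q hq
    have hrtg := hT.2.2.1 p hp q hq
    clear hq
    induction hrtg with
    | refl =>
      refine ⟨p.1.1, p.1.1, p.2.1, p.2.1, ?_, le_rfl, le_rfl, le_rfl, le_rfl,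
        le_rfl, le_rfl, le_rfl, le_rfl⟩
      intro x y u1 u2 u3 u4
      have hx : x = p.1.1 := le_antisymm u2 u1
      have hy : y = p.2.1 := le_antisymm u4 u3
      subst hx; subst hy
      exact hmemM p (hTN hp)
    | tail hab hbc ih =>
      obtain ⟨r1, r2, c1, c2, hRect, b1, b2, b3, b4, b5, b6, b7, b8⟩ := ih
      obtain ⟨hadj, hbT, hcT⟩ := hbc
      obtain ⟨g1, g2, g3, g4⟩ := hadj
      have hMc := hmemM _ (hTN hcT)
      have hres := RectAux.rect_extend hS hRect (by omega) (by omega) hMc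
        (by omega) (by omega) (by omega) (by omega)
      exact ⟨_, _, _, _, hres, by omega, by omega, by omega, by omega,
        by omega, by omega, by omega, by omega⟩
  have key2 : ∀ p ∈ T, ∀ q ∈ T, ∃ r1 r2 c1 c2,
      RectAux.RSet m n r1 r2 c1 c2 ⊆ T ∧
      r1 ≤ p.1.1 ∧ p.1.1 ≤ r2 ∧ c1 ≤ p.2.1 ∧ p.2.1 ≤ c2 ∧
      r1 ≤ q.1.1 ∧ q.1.1 ≤ r2 ∧ c1 ≤ q.2.1 ∧ q.2.1 ≤ c2 := by
    intro p hp q hq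
    obtain ⟨r1, r2, c1, c2, hRect, hb⟩ := key p hp q hq
    have hRN : RectAux.RSet m n r1 r2 c1 c2 ⊆ NP P := fun x hx =>
      hMN x (hRect x.1.1 x.2.1 hx.1 hx.2.1 hx.2.2.1 hx.2.2.2)
    have hpR : p ∈ RectAux.RSet m n r1 r2 c1 c2 :=
      ⟨hb.1, hb.2.1, hb.2.2.1, hb.2.2.2.1⟩
    exact ⟨r1, r2, c1, c2, RectAux.rset_subset_component hT hRN hp hpR, hb⟩
  have corner : ∀ p ∈ T, ∀ q ∈ T, ((p.1, q.2) : Fin m × Fin n) ∈ T := by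
    intro p hp q hq
    obtain ⟨r1, r2, c1, c2, hsub, hb⟩ := key2 p hp q hq
    exact hsub ⟨hb.1, hb.2.1, hb.2.2.2.2.2.2.1, hb.2.2.2.2.2.2.2⟩
  obtain ⟨p0, hp0⟩ := hT.1
  have hfin : T.Finite := T.toFinite
  have hmemF : ∀ x, x ∈ hfin.toFinset ↔ x ∈ T := fun x => hfin.mem_toFinset
  have hFne : hfin.toFinset.Nonempty := ⟨p0, (hmemF p0).mpr hp0⟩
  set Rows := hfin.toFinset.image (fun p => p.1.1) with hRows
  set Cols := hfin.toFinset.image (fun p => p.2.1) with hCols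
  have hRne : Rows.Nonempty := hFne.image _
  have hCne : Cols.Nonempty := hFne.image _
  obtain ⟨pa, hpaF, hpa⟩ := Finset.mem_image.mp (Rows.min'_mem hRne)
  obtain ⟨pb, hpbF, hpb⟩ := Finset.mem_image.mp (Rows.max'_mem hRne)
  obtain ⟨pc, hpcF, hpc⟩ := Finset.mem_image.mp (Cols.min'_mem hCne)
  obtain ⟨pd, hpdF, hpd⟩ := Finset.mem_image.mp (Cols.max'_mem hCne)
  have hlb : ∀ x ∈ T, Rows.min' hRne ≤ x.1.1 ∧ x.1.1 ≤ Rows.max' hRne ∧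
      Cols.min' hCne ≤ x.2.1 ∧ x.2.1 ≤ Cols.max' hCne := by
    intro x hx
    have hxF : x ∈ hfin.toFinset := (hmemF x).mpr hx
    refine ⟨Finset.min'_le _ _ ?_, Finset.le_max' _ _ ?_,
      Finset.min'_le _ _ ?_, Finset.le_max' _ _ ?_⟩
    · rw [hRows]; exact Finset.mem_image_of_mem _ hxF
    · rw [hRows]; exact Finset.mem_image_of_mem _ hxF
    · rw [hCols]; exact Finset.mem_image_of_mem _ hxF
    · rw [hCols]; exact Finset.mem_image_of_mem _ hxF
  have hc11 : ((pa.1, pc.2) : Fin m × Fin n) ∈ T :=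
    corner pa ((hmemF pa).mp hpaF) pc ((hmemF pc).mp hpcF)
  have hc22 : ((pb.1, pd.2) : Fin m × Fin n) ∈ T :=
    corner pb ((hmemF pb).mp hpbF) pd ((hmemF pd).mp hpdF)
  obtain ⟨r1, r2, c1, c2, hsub, b1, b2, b3, b4, b5, b6, b7, b8⟩ := key2 _ hc11 _ hc22
  have b1' : r1 ≤ pa.1.1 := b1
  have b2' : pa.1.1 ≤ r2 := b2
  have b3' : c1 ≤ pc.2.1 := b3
  have b4' : pc.2.1 ≤ c2 := b4
  have b5' : r1 ≤ pb.1.1 := b5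
  have b6' : pb.1.1 ≤ r2 := b6
  have b7' : c1 ≤ pd.2.1 := b7
  have b8' : pd.2.1 ≤ c2 := b8
  refine ⟨Rows.min' hRne, Rows.max' hRne, Cols.min' hCne, Cols.max' hCne, ?_⟩
  apply Set.eq_of_subset_of_subset
  · intro x hx
    exact hlb x hx
  · intro x hx
    obtain ⟨u1, u2, u3, u4⟩ := hx
    apply hsub
    exact ⟨by omega, by omega, by omega, by omega⟩
end

section
/- Let P be a minimal prime ideal of I_mn(2) and let T = X[i,j;s,t] be a connected component of N_P (which is necessarily a rectangle). Then the boundary of T is contained in S_P, and for each boundary edge E of T there exists another connected component T' of N_P, T' ≠ T, whose boundary has nonempty intersection with E. -/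
open MvPolynomial

/-- `E` is a boundary edge of the rectangle `T`. -/
def IsBdryEdge {m n : ℕ} (T E : Set (Fin m × Fin n)) : Prop :=
  ∃ i s j t : ℕ,
    T = {p : Fin m × Fin n | i ≤ p.1.1 ∧ p.1.1 ≤ s ∧ j ≤ p.2.1 ∧ p.2.1 ≤ t} ∧
    E.Nonempty ∧
    (E = {p : Fin m × Fin n | p.1.1 + 1 = i ∧ j ≤ p.2.1 ∧ p.2.1 ≤ t} ∨
     E = {p : Fin m × Fin n | p.1.1 = s + 1 ∧ j ≤ p.2.1 ∧ p.2.1 ≤ t} ∨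
     E = {p : Fin m × Fin n | i ≤ p.1.1 ∧ p.1.1 ≤ s ∧ p.2.1 + 1 = j} ∨
     E = {p : Fin m × Fin n | i ≤ p.1.1 ∧ p.1.1 ≤ s ∧ p.2.1 = t + 1})

-- === auxiliary lemmas ===

lemma gridAdj_symm {m n : ℕ} {p q : Fin m × Fin n} (h : gridAdj p q) : gridAdj q p := by
  obtain ⟨a, b, c, d⟩ := h; exact ⟨b, a, d, c⟩

lemma bdry_not_mem {m n : ℕ} {N T : Set (Fin m × Fin n)} (hT : IsComponent N T) :
    ∀ p ∈ gridBdry T, p ∉ N := by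
  rintro p ⟨hpT, q, hqT, hadj⟩ hpN
  obtain ⟨hne, hTN, hconn, hmax⟩ := hT
  have hins : ConnectedIn (insert p T) := by
    intro a ha b hb
    have lift : ∀ {x y : Fin m × Fin n},
        Relation.ReflTransGen (fun x y => gridAdj x y ∧ x ∈ T ∧ y ∈ T) x y →
        Relation.ReflTransGen (fun x y => gridAdj x y ∧ x ∈ insert p T ∧ y ∈ insert p T) x y := by
      intro x y h
      exact Relation.ReflTransGen.mono
        (fun u v (hh : gridAdj u v ∧ u ∈ T ∧ v ∈ T) => (⟨hh.1, Set.mem_insert_of_mem _ hh.2.1, Set.mem_insert_of_mem _ hh.2.2⟩ : gridAdj u v ∧ u ∈ insert p T ∧ v ∈ insert p T)) _ _ h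
    rcases Set.mem_insert_iff.mp ha with ha' | ha' <;>
      rcases Set.mem_insert_iff.mp hb with hb' | hb'
    · subst ha' hb'; exact Relation.ReflTransGen.refl
    · subst ha'
      exact Relation.ReflTransGen.head
        ⟨hadj, Set.mem_insert _ _, Set.mem_insert_of_mem _ hqT⟩ (lift (hconn q hqT b hb'))
    · subst hb'
      exact Relation.ReflTransGen.tail (lift (hconn a ha' q hqT))
        ⟨gridAdj_symm hadj, Set.mem_insert_of_mem _ hqT, Set.mem_insert _ _⟩
    · exact lift (hconn a ha' b hb')
  have := hmax (insert p T) (Set.subset_insert _ _)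
    (Set.insert_subset_iff.mpr ⟨hpN, hTN⟩) hins
  exact hpT (this ▸ Set.mem_insert p T)

lemma exists_component {m n : ℕ} {N : Set (Fin m × Fin n)} {q : Fin m × Fin n}
    (hq : q ∈ N) : ∃ T, IsComponent N T ∧ q ∈ T := by
  classical
  set r := fun x y : Fin m × Fin n => gridAdj x y ∧ x ∈ N ∧ y ∈ N with hr
  set T := {x | Relation.ReflTransGen r q x} with hTdef
  have hqT : q ∈ T := Relation.ReflTransGen.refl
  have hTN : T ⊆ N := by
    intro x hx
    induction hx with
    | refl => exact hq
    | tail _ h ih => exact h.2.2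
  have hTpath : ∀ x ∈ T, Relation.ReflTransGen (fun a b => gridAdj a b ∧ a ∈ T ∧ b ∈ T) q x := by
    intro x hx
    induction hx with
    | refl => exact Relation.ReflTransGen.refl
    | @tail b c hqb hbc ih =>
        exact Relation.ReflTransGen.tail ih ⟨hbc.1, hqb, Relation.ReflTransGen.tail hqb hbc⟩
  have hsymmT : ∀ {x y : Fin m × Fin n},
      Relation.ReflTransGen (fun a b => gridAdj a b ∧ a ∈ T ∧ b ∈ T) x y →
      Relation.ReflTransGen (fun a b => gridAdj a b ∧ a ∈ T ∧ b ∈ T) y x := by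
    intro x y h
    induction h with
    | refl => exact Relation.ReflTransGen.refl
    | tail _ h ih => exact Relation.ReflTransGen.head ⟨gridAdj_symm h.1, h.2.2, h.2.1⟩ ih
  refine ⟨T, ⟨⟨q, hqT⟩, hTN, ?_, ?_⟩, hqT⟩
  · intro a ha b hb
    exact Relation.ReflTransGen.trans (hsymmT (hTpath a ha)) (hTpath b hb)
  · intro T' hTT' hT'N hconn'
    apply Set.Subset.antisymm _ hTT'
    intro x hx
    exact Relation.ReflTransGen.mono (fun u v (hh : gridAdj u v ∧ u ∈ T' ∧ v ∈ T') => (⟨hh.1, hT'N hh.2.1, hT'N hh.2.2⟩ : r u v))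
      _ _ (hconn' q (hTT' hqT) x hx)

lemma core_contra {K : Type*} [Field K] {m n : ℕ}
    {P : Ideal (MvPolynomial (Fin m × Fin n) K)}
    (hP : P ∈ (adjMinors2Ideal K m n).minimalPrimes)
    (g : Fin m × Fin n → Polynomial (MvPolynomial (Fin m × Fin n) K ⧸ P))
    (hminor : ∀ (a b : ℕ) (ha : a + 1 < m) (hb : b + 1 < n),
      g (⟨a, by omega⟩, ⟨b, by omega⟩) * g (⟨a + 1, ha⟩, ⟨b + 1, hb⟩) =
      g (⟨a, by omega⟩, ⟨b + 1, hb⟩) * g (⟨a + 1, ha⟩, ⟨b, by omega⟩))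
    (hev : ∀ p, Polynomial.eval 0 (g p) = Ideal.Quotient.mk P (X p))
    (hneq : ∃ p, X p ∈ P ∧ g p ≠ 0) : False := by
  classical
  obtain ⟨⟨hPp, hIP⟩, hmin⟩ := hP
  haveI := hPp
  set R := MvPolynomial (Fin m × Fin n) K
  let φ : R →+* Polynomial (R ⧸ P) :=
    eval₂Hom (Polynomial.C.comp ((Ideal.Quotient.mk P).comp MvPolynomial.C)) g
  have hφX : ∀ p, φ (X p) = g p := fun p => eval₂Hom_X' _ _ _
  have hQprime : (RingHom.ker φ).IsPrime := RingHom.ker_isPrime φ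
  have hIQ : adjMinors2Ideal K m n ≤ RingHom.ker φ := by
    rw [adjMinors2Ideal, Ideal.span_le]
    rintro f ⟨a, b, ha, hb, rfl⟩
    simp only [SetLike.mem_coe, RingHom.mem_ker, map_sub, map_mul, hφX]
    rw [hminor a b ha hb, sub_self]
  have hkey : (Polynomial.evalRingHom (0 : R ⧸ P)).comp φ = Ideal.Quotient.mk P := by
    apply MvPolynomial.ringHom_ext
    · intro a
      simp [φ, Polynomial.coe_evalRingHom]
    · intro p
      simp only [RingHom.comp_apply, hφX, Polynomial.coe_evalRingHom]
      exact hev p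
  have hQP : RingHom.ker φ ≤ P := by
    intro f hf
    have h0 : Ideal.Quotient.mk P f = 0 := by
      rw [← hkey]
      simp only [RingHom.comp_apply, RingHom.mem_ker.mp hf, map_zero]
    exact (Ideal.Quotient.eq_zero_iff_mem).mp h0
  have hPQ : P ≤ RingHom.ker φ := hmin ⟨hQprime, hIQ⟩ hQP
  obtain ⟨p, hpP, hgp⟩ := hneq
  exact hgp (by simpa [hφX] using RingHom.mem_ker.mp (hPQ hpP))


set_option maxHeartbeats 1000000 in
lemma row_contra {K : Type*} [Field K] {m n : ℕ}
    {P : Ideal (MvPolynomial (Fin m × Fin n) K)}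
    (hP : P ∈ (adjMinors2Ideal K m n).minimalPrimes)
    (r rT j t : ℕ) (hrm : r < m) (hrTm : rT < m) (htn : t < n) (hjt : j ≤ t)
    (hadj : rT = r + 1 ∨ r = rT + 1)
    (hT : X (R := K) (⟨rT, hrTm⟩, (⟨j, by omega⟩ : Fin n)) ∉ P)
    (hE : ∀ c (hc : c < n), j ≤ c → c ≤ t →
      X ((⟨r, hrm⟩ : Fin m), (⟨c, hc⟩ : Fin n)) ∈ P)
    (hsideL : ∀ (_ : 1 ≤ j) (h2 : j - 1 < n), X (R := K) (⟨rT, hrTm⟩, ⟨j - 1, h2⟩) ∈ P)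
    (hsideR : ∀ (h1 : t + 1 < n), X (R := K) (⟨rT, hrTm⟩, ⟨t + 1, h1⟩) ∈ P)
    (hcornL : ∀ (_ : 1 ≤ j) (h2 : j - 1 < n), X (R := K) ((⟨r, hrm⟩ : Fin m), ⟨j - 1, h2⟩) ∈ P)
    (hcornR : ∀ (h1 : t + 1 < n), X (R := K) ((⟨r, hrm⟩ : Fin m), ⟨t + 1, h1⟩) ∈ P)
    (hfar : ∀ rF (hF : rF < m), rF ≠ rT → (rF = r + 1 ∨ r = rF + 1) →
        ∀ c (hc : c < n), j ≤ c + 1 → c ≤ t + 1 →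
          X ((⟨rF, hF⟩ : Fin m), (⟨c, hc⟩ : Fin n)) ∈ P) : False := by
  classical
  have hPp : P.IsPrime := hP.1.1
  have hIP : adjMinors2Ideal K m n ≤ P := hP.1.2
  haveI := hPp
  set g : Fin m × Fin n → Polynomial (MvPolynomial (Fin m × Fin n) K ⧸ P) :=
    fun p => if p.1.1 = r ∧ j ≤ p.2.1 ∧ p.2.1 ≤ t
      then Polynomial.X * Polynomial.C (Ideal.Quotient.mk P (X (⟨rT, hrTm⟩, p.2)))
      else Polynomial.C (Ideal.Quotient.mk P (X p)) with hg
  have gpos : ∀ (u : ℕ) (hu : u < m) (v : ℕ) (hv : v < n), u = r → j ≤ v → v ≤ t →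
      g (⟨u, hu⟩, ⟨v, hv⟩) =
        Polynomial.X * Polynomial.C (Ideal.Quotient.mk P (X (⟨rT, hrTm⟩, ⟨v, hv⟩))) := by
    intro u hu v hv h1 h2 h3
    simp only [hg]
    exact if_pos ⟨h1, h2, h3⟩
  have gneg : ∀ (u : ℕ) (hu : u < m) (v : ℕ) (hv : v < n), ¬(u = r ∧ j ≤ v ∧ v ≤ t) →
      g (⟨u, hu⟩, ⟨v, hv⟩) = Polynomial.C (Ideal.Quotient.mk P (X (⟨u, hu⟩, ⟨v, hv⟩))) := by
    intro u hu v hv h1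
    simp only [hg]
    exact if_neg h1
  have hplain : ∀ (a b : ℕ) (ha : a + 1 < m) (hb : b + 1 < n),
      Polynomial.C (Ideal.Quotient.mk P (X (R := K) ((⟨a, by omega⟩ : Fin m), (⟨b, by omega⟩ : Fin n)))) *
        Polynomial.C (Ideal.Quotient.mk P (X (⟨a + 1, ha⟩, ⟨b + 1, hb⟩))) =
      Polynomial.C (Ideal.Quotient.mk P (X ((⟨a, by omega⟩ : Fin m), ⟨b + 1, hb⟩))) *
        Polynomial.C (Ideal.Quotient.mk P (X (⟨a + 1, ha⟩, (⟨b, by omega⟩ : Fin n)))) := by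
    intro a b ha hb
    rw [← Polynomial.C_mul, ← Polynomial.C_mul, ← map_mul, ← map_mul]
    congr 1
    rw [← sub_eq_zero, ← map_sub, Ideal.Quotient.eq_zero_iff_mem]
    exact hIP (Ideal.subset_span ⟨a, b, ha, hb, rfl⟩)
  apply core_contra hP g
  · -- minors vanish
    intro a b ha hb
    by_cases har : a = r
    · subst har
      -- top row of the minor meets row r
      by_cases h1 : j ≤ b ∧ b ≤ t <;> by_cases h2 : j ≤ b + 1 ∧ b + 1 ≤ t
      · -- both top entries in E
        rw [gpos a (by omega) b (by omega) rfl h1.1 h1.2,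
            gpos a (by omega) (b + 1) hb rfl h2.1 h2.2,
            gneg (a + 1) ha b (by omega) (by omega),
            gneg (a + 1) ha (b + 1) hb (by omega)]
        rcases hadj with hn | hf
        · have e : (⟨a + 1, ha⟩ : Fin m) = ⟨rT, hrTm⟩ := by
            apply Fin.ext; simp; omega
          rw [e]; ring
        · rw [Ideal.Quotient.eq_zero_iff_mem.mpr
              (hfar (a + 1) ha (by omega) (Or.inl rfl) b (by omega) (by omega) (by omega)),
            Ideal.Quotient.eq_zero_iff_mem.mpr
              (hfar (a + 1) ha (by omega) (Or.inl rfl) (b + 1) hb (by omega) (by omega))]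
          simp
      · -- right end: b = t
        have hbt : b = t := by omega
        subst hbt
        rw [gpos a (by omega) b (by omega) rfl h1.1 h1.2,
            gneg a (by omega) (b + 1) hb (by omega),
            gneg (a + 1) ha b (by omega) (by omega),
            gneg (a + 1) ha (b + 1) hb (by omega)]
        have e12 : Ideal.Quotient.mk P (X (R := K) ((⟨a, by omega⟩ : Fin m), ⟨b + 1, hb⟩)) = 0 :=
          Ideal.Quotient.eq_zero_iff_mem.mpr (hcornR hb)
        have e22 : Ideal.Quotient.mk P (X (R := K) ((⟨a + 1, ha⟩ : Fin m), ⟨b + 1, hb⟩)) = 0 := by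
          rw [Ideal.Quotient.eq_zero_iff_mem]
          rcases hadj with hn | hf
          · have e : (⟨a + 1, ha⟩ : Fin m) = ⟨rT, hrTm⟩ := by
              apply Fin.ext; simp; omega
            rw [e]; exact hsideR hb
          · exact hfar (a + 1) ha (by omega) (Or.inl rfl) (b + 1) hb (by omega) (by omega)
        rw [e12, e22]; simp
      · -- left end: j = b + 1
        have hjb : j = b + 1 := by omega
        subst hjb
        rw [gpos a (by omega) (b + 1) hb rfl h2.1 h2.2,
            gneg a (by omega) b (by omega) (by omega),
            gneg (a + 1) ha b (by omega) (by omega),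
            gneg (a + 1) ha (b + 1) hb (by omega)]
        have e11 : Ideal.Quotient.mk P (X (R := K) ((⟨a, by omega⟩ : Fin m), (⟨b, by omega⟩ : Fin n))) = 0 :=
          Ideal.Quotient.eq_zero_iff_mem.mpr (hcornL (by omega) (by omega))
        have e21 : Ideal.Quotient.mk P (X (R := K) ((⟨a + 1, ha⟩ : Fin m), (⟨b, by omega⟩ : Fin n))) = 0 := by
          rw [Ideal.Quotient.eq_zero_iff_mem]
          rcases hadj with hn | hf
          · have e : (⟨a + 1, ha⟩ : Fin m) = ⟨rT, hrTm⟩ := by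
              apply Fin.ext; simp; omega
            rw [e]; exact hsideL (by omega) (by omega)
          · exact hfar (a + 1) ha (by omega) (Or.inl rfl) b (by omega) (by omega) (by omega)
        rw [e11, e21]; simp
      · -- neither top entry in E
        rw [gneg a (by omega) b (by omega) (by omega),
            gneg a (by omega) (b + 1) hb (by omega),
            gneg (a + 1) ha b (by omega) (by omega),
            gneg (a + 1) ha (b + 1) hb (by omega)]
        exact hplain a b ha hb
    · by_cases har2 : a + 1 = r
      · have hra : r = a + 1 := har2.symm
        subst hra
        -- bottom row of the minor meets row r
        by_cases h1 : j ≤ b ∧ b ≤ t <;> by_cases h2 : j ≤ b + 1 ∧ b + 1 ≤ t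
        · rw [gpos (a + 1) ha b (by omega) rfl h1.1 h1.2,
              gpos (a + 1) ha (b + 1) hb rfl h2.1 h2.2,
              gneg a (by omega) b (by omega) (by omega),
              gneg a (by omega) (b + 1) hb (by omega)]
          rcases hadj with hf | hn
          · rw [Ideal.Quotient.eq_zero_iff_mem.mpr
                (hfar a (by omega) (by omega) (Or.inr rfl) b (by omega) (by omega) (by omega)),
              Ideal.Quotient.eq_zero_iff_mem.mpr
                (hfar a (by omega) (by omega) (Or.inr rfl) (b + 1) hb (by omega) (by omega))]
            simp
          · have e : (⟨a, by omega⟩ : Fin m) = ⟨rT, hrTm⟩ := by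
              apply Fin.ext; simp; omega
            rw [e]; ring
        · have hbt : b = t := by omega
          subst hbt
          rw [gpos (a + 1) ha b (by omega) rfl h1.1 h1.2,
              gneg a (by omega) b (by omega) (by omega),
              gneg a (by omega) (b + 1) hb (by omega),
              gneg (a + 1) ha (b + 1) hb (by omega)]
          have e22 : Ideal.Quotient.mk P (X (R := K) ((⟨a + 1, ha⟩ : Fin m), ⟨b + 1, hb⟩)) = 0 :=
            Ideal.Quotient.eq_zero_iff_mem.mpr (hcornR hb)
          have e12 : Ideal.Quotient.mk P (X (R := K) ((⟨a, by omega⟩ : Fin m), ⟨b + 1, hb⟩)) = 0 := by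
            rw [Ideal.Quotient.eq_zero_iff_mem]
            rcases hadj with hf | hn
            · exact hfar a (by omega) (by omega) (Or.inr rfl) (b + 1) hb (by omega) (by omega)
            · have e : (⟨a, by omega⟩ : Fin m) = ⟨rT, hrTm⟩ := Fin.ext (show a = rT by omega)
              rw [e]; exact hsideR hb
          rw [e12, e22]; simp
        · have hjb : j = b + 1 := by omega
          subst hjb
          rw [gpos (a + 1) ha (b + 1) hb rfl h2.1 h2.2,
              gneg a (by omega) b (by omega) (by omega),
              gneg a (by omega) (b + 1) hb (by omega),
              gneg (a + 1) ha b (by omega) (by omega)]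
          have e21 : Ideal.Quotient.mk P (X (R := K) ((⟨a + 1, ha⟩ : Fin m), (⟨b, by omega⟩ : Fin n))) = 0 :=
            Ideal.Quotient.eq_zero_iff_mem.mpr (hcornL (by omega) (by omega))
          have e11 : Ideal.Quotient.mk P (X (R := K) ((⟨a, by omega⟩ : Fin m), (⟨b, by omega⟩ : Fin n))) = 0 := by
            rw [Ideal.Quotient.eq_zero_iff_mem]
            rcases hadj with hf | hn
            · exact hfar a (by omega) (by omega) (Or.inr rfl) b (by omega) (by omega) (by omega)
            · have e : (⟨a, by omega⟩ : Fin m) = ⟨rT, hrTm⟩ := Fin.ext (show a = rT by omega)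
              rw [e]; exact hsideL (by omega) (by omega)
          rw [e11, e21]; simp
        · rw [gneg a (by omega) b (by omega) (by omega),
              gneg a (by omega) (b + 1) hb (by omega),
              gneg (a + 1) ha b (by omega) (by omega),
              gneg (a + 1) ha (b + 1) hb (by omega)]
          exact hplain a b ha hb
      · rw [gneg a (by omega) b (by omega) (by omega),
            gneg a (by omega) (b + 1) hb (by omega),
            gneg (a + 1) ha b (by omega) (by omega),
            gneg (a + 1) ha (b + 1) hb (by omega)]
        exact hplain a b ha hb
  · -- eval at 0 agrees with mk
    intro p
    obtain ⟨⟨u, hu⟩, ⟨v, hv⟩⟩ := p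
    by_cases h : u = r ∧ j ≤ v ∧ v ≤ t
    · rw [gpos u hu v hv h.1 h.2.1 h.2.2]
      simp only [Polynomial.eval_mul, Polynomial.eval_X, Polynomial.eval_C, zero_mul]
      symm
      rw [Ideal.Quotient.eq_zero_iff_mem]
      obtain ⟨h1, h2, h3⟩ := h
      subst h1
      exact hE v hv h2 h3
    · rw [gneg u hu v hv h]
      simp
  · -- nontrivial witness
    have hjn : j < n := by omega
    refine ⟨((⟨r, hrm⟩ : Fin m), (⟨j, hjn⟩ : Fin n)), hE j hjn le_rfl hjt, ?_⟩
    rw [gpos r hrm j hjn rfl le_rfl hjt]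
    haveI : Nontrivial (MvPolynomial (Fin m × Fin n) K ⧸ P) :=
      Ideal.Quotient.nontrivial_iff.mpr hPp.ne_top
    exact mul_ne_zero Polynomial.X_ne_zero
      (by
        rw [Ne, Polynomial.C_eq_zero, Ideal.Quotient.eq_zero_iff_mem]
        exact hT)

set_option maxHeartbeats 1000000 in
lemma col_contra {K : Type*} [Field K] {m n : ℕ}
    {P : Ideal (MvPolynomial (Fin m × Fin n) K)}
    (hP : P ∈ (adjMinors2Ideal K m n).minimalPrimes)
    (r rT j t : ℕ) (hrn : r < n) (hrTn : rT < n) (htm : t < m) (hjt : j ≤ t)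
    (hadj : rT = r + 1 ∨ r = rT + 1)
    (hT : X (R := K) ((⟨j, by omega⟩ : Fin m), ⟨rT, hrTn⟩) ∉ P)
    (hE : ∀ c (hc : c < m), j ≤ c → c ≤ t →
      X ((⟨c, hc⟩ : Fin m), (⟨r, hrn⟩ : Fin n)) ∈ P)
    (hsideL : ∀ (_ : 1 ≤ j) (h2 : j - 1 < m), X (R := K) (⟨j - 1, h2⟩, ⟨rT, hrTn⟩) ∈ P)
    (hsideR : ∀ (h1 : t + 1 < m), X (R := K) (⟨t + 1, h1⟩, ⟨rT, hrTn⟩) ∈ P)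
    (hcornL : ∀ (_ : 1 ≤ j) (h2 : j - 1 < m), X (R := K) (⟨j - 1, h2⟩, (⟨r, hrn⟩ : Fin n)) ∈ P)
    (hcornR : ∀ (h1 : t + 1 < m), X (R := K) (⟨t + 1, h1⟩, (⟨r, hrn⟩ : Fin n)) ∈ P)
    (hfar : ∀ cF (hF : cF < n), cF ≠ rT → (cF = r + 1 ∨ r = cF + 1) →
        ∀ c (hc : c < m), j ≤ c + 1 → c ≤ t + 1 →
          X ((⟨c, hc⟩ : Fin m), (⟨cF, hF⟩ : Fin n)) ∈ P) : False := by
  classical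
  have hPp : P.IsPrime := hP.1.1
  have hIP : adjMinors2Ideal K m n ≤ P := hP.1.2
  haveI := hPp
  set g : Fin m × Fin n → Polynomial (MvPolynomial (Fin m × Fin n) K ⧸ P) :=
    fun p => if p.2.1 = r ∧ j ≤ p.1.1 ∧ p.1.1 ≤ t
      then Polynomial.X * Polynomial.C (Ideal.Quotient.mk P (X (p.1, ⟨rT, hrTn⟩)))
      else Polynomial.C (Ideal.Quotient.mk P (X p)) with hg
  have gpos : ∀ (u : ℕ) (hu : u < m) (v : ℕ) (hv : v < n), v = r → j ≤ u → u ≤ t →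
      g (⟨u, hu⟩, ⟨v, hv⟩) =
        Polynomial.X * Polynomial.C (Ideal.Quotient.mk P (X (⟨u, hu⟩, ⟨rT, hrTn⟩))) := by
    intro u hu v hv h1 h2 h3
    simp only [hg]
    exact if_pos ⟨h1, h2, h3⟩
  have gneg : ∀ (u : ℕ) (hu : u < m) (v : ℕ) (hv : v < n), ¬(v = r ∧ j ≤ u ∧ u ≤ t) →
      g (⟨u, hu⟩, ⟨v, hv⟩) = Polynomial.C (Ideal.Quotient.mk P (X (⟨u, hu⟩, ⟨v, hv⟩))) := by
    intro u hu v hv h1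
    simp only [hg]
    exact if_neg h1
  have hplain : ∀ (a b : ℕ) (ha : a + 1 < m) (hb : b + 1 < n),
      Polynomial.C (Ideal.Quotient.mk P (X (R := K) ((⟨a, by omega⟩ : Fin m), (⟨b, by omega⟩ : Fin n)))) *
        Polynomial.C (Ideal.Quotient.mk P (X (⟨a + 1, ha⟩, ⟨b + 1, hb⟩))) =
      Polynomial.C (Ideal.Quotient.mk P (X ((⟨a, by omega⟩ : Fin m), ⟨b + 1, hb⟩))) *
        Polynomial.C (Ideal.Quotient.mk P (X (⟨a + 1, ha⟩, (⟨b, by omega⟩ : Fin n)))) := by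
    intro a b ha hb
    rw [← Polynomial.C_mul, ← Polynomial.C_mul, ← map_mul, ← map_mul]
    congr 1
    rw [← sub_eq_zero, ← map_sub, Ideal.Quotient.eq_zero_iff_mem]
    exact hIP (Ideal.subset_span ⟨a, b, ha, hb, rfl⟩)
  apply core_contra hP g
  · -- minors vanish
    intro a b ha hb
    by_cases hbr : b = r
    · subst hbr
      -- left column of the minor meets column r
      by_cases h1 : j ≤ a ∧ a ≤ t <;> by_cases h2 : j ≤ a + 1 ∧ a + 1 ≤ t
      · -- both left entries in E
        rw [gpos a (by omega) b (by omega) rfl h1.1 h1.2,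
            gpos (a + 1) ha b (by omega) rfl h2.1 h2.2,
            gneg a (by omega) (b + 1) hb (by omega),
            gneg (a + 1) ha (b + 1) hb (by omega)]
        rcases hadj with hn | hf
        · have e : (⟨b + 1, hb⟩ : Fin n) = ⟨rT, hrTn⟩ := Fin.ext (show b + 1 = rT by omega)
          rw [e]; ring
        · rw [Ideal.Quotient.eq_zero_iff_mem.mpr
              (hfar (b + 1) hb (by omega) (Or.inl rfl) a (by omega) (by omega) (by omega)),
            Ideal.Quotient.eq_zero_iff_mem.mpr
              (hfar (b + 1) hb (by omega) (Or.inl rfl) (a + 1) ha (by omega) (by omega))]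
          simp
      · -- bottom end: a = t
        have hat : a = t := by omega
        subst hat
        rw [gpos a (by omega) b (by omega) rfl h1.1 h1.2,
            gneg (a + 1) ha b (by omega) (by omega),
            gneg a (by omega) (b + 1) hb (by omega),
            gneg (a + 1) ha (b + 1) hb (by omega)]
        have e21 : Ideal.Quotient.mk P (X (R := K) ((⟨a + 1, ha⟩ : Fin m), (⟨b, by omega⟩ : Fin n))) = 0 :=
          Ideal.Quotient.eq_zero_iff_mem.mpr (hcornR ha)
        have e22 : Ideal.Quotient.mk P (X (R := K) ((⟨a + 1, ha⟩ : Fin m), ⟨b + 1, hb⟩)) = 0 := by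
          rw [Ideal.Quotient.eq_zero_iff_mem]
          rcases hadj with hn | hf
          · have e : (⟨b + 1, hb⟩ : Fin n) = ⟨rT, hrTn⟩ := Fin.ext (show b + 1 = rT by omega)
            rw [e]; exact hsideR ha
          · exact hfar (b + 1) hb (by omega) (Or.inl rfl) (a + 1) ha (by omega) (by omega)
        rw [e21, e22]; simp
      · -- top end: j = a + 1
        have hja : j = a + 1 := by omega
        subst hja
        rw [gpos (a + 1) ha b (by omega) rfl h2.1 h2.2,
            gneg a (by omega) b (by omega) (by omega),
            gneg a (by omega) (b + 1) hb (by omega),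
            gneg (a + 1) ha (b + 1) hb (by omega)]
        have e11 : Ideal.Quotient.mk P (X (R := K) ((⟨a, by omega⟩ : Fin m), (⟨b, by omega⟩ : Fin n))) = 0 :=
          Ideal.Quotient.eq_zero_iff_mem.mpr (hcornL (by omega) (by omega))
        have e12 : Ideal.Quotient.mk P (X (R := K) ((⟨a, by omega⟩ : Fin m), ⟨b + 1, hb⟩)) = 0 := by
          rw [Ideal.Quotient.eq_zero_iff_mem]
          rcases hadj with hn | hf
          · have e : (⟨b + 1, hb⟩ : Fin n) = ⟨rT, hrTn⟩ := Fin.ext (show b + 1 = rT by omega)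
            rw [e]; exact hsideL (by omega) (by omega)
          · exact hfar (b + 1) hb (by omega) (Or.inl rfl) a (by omega) (by omega) (by omega)
        rw [e11, e12]; simp
      · -- neither left entry in E
        rw [gneg a (by omega) b (by omega) (by omega),
            gneg a (by omega) (b + 1) hb (by omega),
            gneg (a + 1) ha b (by omega) (by omega),
            gneg (a + 1) ha (b + 1) hb (by omega)]
        exact hplain a b ha hb
    · by_cases hbr2 : b + 1 = r
      · have hrb : r = b + 1 := hbr2.symm
        subst hrb
        -- right column of the minor meets column r
        by_cases h1 : j ≤ a ∧ a ≤ t <;> by_cases h2 : j ≤ a + 1 ∧ a + 1 ≤ t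
        · rw [gpos a (by omega) (b + 1) hb rfl h1.1 h1.2,
              gpos (a + 1) ha (b + 1) hb rfl h2.1 h2.2,
              gneg a (by omega) b (by omega) (by omega),
              gneg (a + 1) ha b (by omega) (by omega)]
          rcases hadj with hf | hn
          · rw [Ideal.Quotient.eq_zero_iff_mem.mpr
                (hfar b (by omega) (by omega) (Or.inr rfl) a (by omega) (by omega) (by omega)),
              Ideal.Quotient.eq_zero_iff_mem.mpr
                (hfar b (by omega) (by omega) (Or.inr rfl) (a + 1) ha (by omega) (by omega))]
            simp
          · have e : (⟨b, by omega⟩ : Fin n) = ⟨rT, hrTn⟩ := Fin.ext (show b = rT by omega)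
            rw [e]; ring
        · have hat : a = t := by omega
          subst hat
          rw [gpos a (by omega) (b + 1) hb rfl h1.1 h1.2,
              gneg a (by omega) b (by omega) (by omega),
              gneg (a + 1) ha b (by omega) (by omega),
              gneg (a + 1) ha (b + 1) hb (by omega)]
          have e22 : Ideal.Quotient.mk P (X (R := K) ((⟨a + 1, ha⟩ : Fin m), ⟨b + 1, hb⟩)) = 0 :=
            Ideal.Quotient.eq_zero_iff_mem.mpr (hcornR ha)
          have e21 : Ideal.Quotient.mk P (X (R := K) ((⟨a + 1, ha⟩ : Fin m), (⟨b, by omega⟩ : Fin n))) = 0 := by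
            rw [Ideal.Quotient.eq_zero_iff_mem]
            rcases hadj with hf | hn
            · exact hfar b (by omega) (by omega) (Or.inr rfl) (a + 1) ha (by omega) (by omega)
            · have e : (⟨b, by omega⟩ : Fin n) = ⟨rT, hrTn⟩ := Fin.ext (show b = rT by omega)
              rw [e]; exact hsideR ha
          rw [e21, e22]; simp
        · have hja : j = a + 1 := by omega
          subst hja
          rw [gpos (a + 1) ha (b + 1) hb rfl h2.1 h2.2,
              gneg a (by omega) b (by omega) (by omega),
              gneg a (by omega) (b + 1) hb (by omega),
              gneg (a + 1) ha b (by omega) (by omega)]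
          have e12 : Ideal.Quotient.mk P (X (R := K) ((⟨a, by omega⟩ : Fin m), ⟨b + 1, hb⟩)) = 0 :=
            Ideal.Quotient.eq_zero_iff_mem.mpr (hcornL (by omega) (by omega))
          have e11 : Ideal.Quotient.mk P (X (R := K) ((⟨a, by omega⟩ : Fin m), (⟨b, by omega⟩ : Fin n))) = 0 := by
            rw [Ideal.Quotient.eq_zero_iff_mem]
            rcases hadj with hf | hn
            · exact hfar b (by omega) (by omega) (Or.inr rfl) a (by omega) (by omega) (by omega)
            · have e : (⟨b, by omega⟩ : Fin n) = ⟨rT, hrTn⟩ := Fin.ext (show b = rT by omega)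
              rw [e]; exact hsideL (by omega) (by omega)
          rw [e11, e12]; simp
        · rw [gneg a (by omega) b (by omega) (by omega),
              gneg a (by omega) (b + 1) hb (by omega),
              gneg (a + 1) ha b (by omega) (by omega),
              gneg (a + 1) ha (b + 1) hb (by omega)]
          exact hplain a b ha hb
      · rw [gneg a (by omega) b (by omega) (by omega),
            gneg a (by omega) (b + 1) hb (by omega),
            gneg (a + 1) ha b (by omega) (by omega),
            gneg (a + 1) ha (b + 1) hb (by omega)]
        exact hplain a b ha hb
  · -- eval at 0 agrees with mk
    intro p
    obtain ⟨⟨u, hu⟩, ⟨v, hv⟩⟩ := p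
    by_cases h : v = r ∧ j ≤ u ∧ u ≤ t
    · rw [gpos u hu v hv h.1 h.2.1 h.2.2]
      simp only [Polynomial.eval_mul, Polynomial.eval_X, Polynomial.eval_C, zero_mul]
      symm
      rw [Ideal.Quotient.eq_zero_iff_mem]
      obtain ⟨h1, h2, h3⟩ := h
      subst h1
      exact hE u hu h2 h3
    · rw [gneg u hu v hv h]
      simp
  · -- nontrivial witness
    have hjm : j < m := by omega
    refine ⟨((⟨j, hjm⟩ : Fin m), (⟨r, hrn⟩ : Fin n)), hE j hjm le_rfl hjt, ?_⟩
    rw [gpos j hjm r hrn rfl le_rfl hjt]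
    haveI : Nontrivial (MvPolynomial (Fin m × Fin n) K ⧸ P) :=
      Ideal.Quotient.nontrivial_iff.mpr hPp.ne_top
    exact mul_ne_zero Polynomial.X_ne_zero
      (by
        rw [Ne, Polynomial.C_eq_zero, Ideal.Quotient.eq_zero_iff_mem]
        exact hT)

/-- the boundary of a connected component `T` of `N_P` lies in `S_P`, and
every boundary edge of `T` meets the boundary of another component of `N_P`. -/
theorem component_boundary_in_SP_and_edges_meet
    (K : Type*) [Field K] (m n : ℕ) (hm : 2 ≤ m) (hn : 2 ≤ n)
    (P : Ideal (MvPolynomial (Fin m × Fin n) K))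
    (hP : P ∈ (adjMinors2Ideal K m n).minimalPrimes)
    (T : Set (Fin m × Fin n)) (hT : IsComponent (NP P) T) :
    gridBdry T ⊆ SP P ∧
    ∀ E, IsBdryEdge T E →
      ∃ T', IsComponent (NP P) T' ∧ T' ≠ T ∧ (gridBdry T' ∩ E).Nonempty := by
  classical
  have part1 : gridBdry T ⊆ SP P := by
    intro p hp
    by_contra h
    exact bdry_not_mem hT p hp h
  refine ⟨part1, ?_⟩
  intro E hE
  by_contra hcon
  obtain ⟨i, s, j, t, hTeq, hEne, hEcase⟩ := hE
  obtain ⟨q0, hq0⟩ := hT.1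
  rw [hTeq] at hq0
  simp only [Set.mem_setOf_eq] at hq0
  have hq01 := q0.1.isLt
  have hq02 := q0.2.isLt
  set s' := min s (m - 1) with hs'
  set t' := min t (n - 1) with ht'
  have hTeq' : T = {p : Fin m × Fin n | i ≤ p.1.1 ∧ p.1.1 ≤ s' ∧ j ≤ p.2.1 ∧ p.2.1 ≤ t'} := by
    rw [hTeq]
    ext p
    have h1 := p.1.isLt
    have h2 := p.2.isLt
    simp only [Set.mem_setOf_eq]
    omega
  have his' : i ≤ s' := by omega
  have hjt' : j ≤ t' := by omega
  have hs'm : s' < m := by omega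
  have ht'n : t' < n := by omega
  have hmemT : ∀ (u : ℕ) (hu : u < m) (v : ℕ) (hv : v < n),
      i ≤ u → u ≤ s' → j ≤ v → v ≤ t' → ((⟨u, hu⟩ : Fin m), (⟨v, hv⟩ : Fin n)) ∈ T := by
    intro u hu v hv h1 h2 h3 h4
    rw [hTeq']
    exact ⟨h1, h2, h3, h4⟩
  have hnotT : ∀ (u : ℕ) (hu : u < m) (v : ℕ) (hv : v < n),
      ¬(i ≤ u ∧ u ≤ s' ∧ j ≤ v ∧ v ≤ t') → ((⟨u, hu⟩ : Fin m), (⟨v, hv⟩ : Fin n)) ∉ T := by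
    intro u hu v hv h hmem
    rw [hTeq'] at hmem
    exact h hmem
  have adjmk : ∀ (u1 : ℕ) (h1 : u1 < m) (v1 : ℕ) (k1 : v1 < n)
      (u2 : ℕ) (h2 : u2 < m) (v2 : ℕ) (k2 : v2 < n),
      u1 ≤ u2 + 1 → u2 ≤ u1 + 1 → v1 ≤ v2 + 1 → v2 ≤ v1 + 1 →
      gridAdj ((⟨u1, h1⟩ : Fin m), (⟨v1, k1⟩ : Fin n)) ((⟨u2, h2⟩ : Fin m), (⟨v2, k2⟩ : Fin n)) :=
    fun _ _ _ _ _ _ _ _ a b c d => ⟨a, b, c, d⟩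
  have hNP : ∀ (q : Fin m × Fin n), q ∉ T → (∃ e ∈ E, gridAdj e q ∧ X e ∈ P) → X q ∈ P := by
    rintro q hqT ⟨e, heE, headj, heP⟩
    by_contra hq
    obtain ⟨T'', hT'', hqT''⟩ := exists_component (N := NP P) hq
    exact hcon ⟨T'', hT'', fun h => hqT (h ▸ hqT''),
      ⟨e, ⟨fun hmm => (hT''.2.1 hmm) heP, q, hqT'', headj⟩, heE⟩⟩
  rcases hEcase with hEc | hEc | hEc | hEc
  · -- top edge: row i - 1
    obtain ⟨e0, he0⟩ := hEne
    rw [hEc] at he0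
    simp only [Set.mem_setOf_eq] at he0
    have he01 := e0.1.isLt
    have he02 := e0.2.isLt
    refine row_contra hP (i - 1) i j t' (by omega) (by omega) (by omega) (by omega)
      (Or.inl (by omega)) ?_ ?_ ?_ ?_ ?_ ?_ ?_
    · exact hT.2.1 (hmemT i (by omega) j (by omega) le_rfl his' le_rfl hjt')
    · intro c hc h1 h2
      exact part1 ⟨hnotT (i - 1) (by omega) c hc (by omega),
        ((⟨i, by omega⟩ : Fin m), (⟨c, hc⟩ : Fin n)),
        hmemT i (by omega) c hc le_rfl his' h1 h2,
        adjmk _ _ _ _ _ _ _ _ (by omega) (by omega) (by omega) (by omega)⟩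
    · intro h1 h2
      exact part1 ⟨hnotT i (by omega) (j - 1) h2 (by omega),
        ((⟨i, by omega⟩ : Fin m), (⟨j, by omega⟩ : Fin n)),
        hmemT i (by omega) j (by omega) le_rfl his' le_rfl hjt',
        adjmk _ _ _ _ _ _ _ _ (by omega) (by omega) (by omega) (by omega)⟩
    · intro h1
      exact part1 ⟨hnotT i (by omega) (t' + 1) h1 (by omega),
        ((⟨i, by omega⟩ : Fin m), (⟨t', by omega⟩ : Fin n)),
        hmemT i (by omega) t' (by omega) le_rfl his' hjt' le_rfl,
        adjmk _ _ _ _ _ _ _ _ (by omega) (by omega) (by omega) (by omega)⟩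
    · intro h1 h2
      exact part1 ⟨hnotT (i - 1) (by omega) (j - 1) h2 (by omega),
        ((⟨i, by omega⟩ : Fin m), (⟨j, by omega⟩ : Fin n)),
        hmemT i (by omega) j (by omega) le_rfl his' le_rfl hjt',
        adjmk _ _ _ _ _ _ _ _ (by omega) (by omega) (by omega) (by omega)⟩
    · intro h1
      exact part1 ⟨hnotT (i - 1) (by omega) (t' + 1) h1 (by omega),
        ((⟨i, by omega⟩ : Fin m), (⟨t', by omega⟩ : Fin n)),
        hmemT i (by omega) t' (by omega) le_rfl his' hjt' le_rfl,
        adjmk _ _ _ _ _ _ _ _ (by omega) (by omega) (by omega) (by omega)⟩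
    · intro rF hF hne hd c hc h1 h2
      have hrF : rF + 2 = i := by omega
      apply hNP
      · exact hnotT rF hF c hc (by omega)
      · set c2 := min (max c j) t' with hc2
        refine ⟨((⟨i - 1, by omega⟩ : Fin m), (⟨c2, by omega⟩ : Fin n)), ?_, ?_, ?_⟩
        · rw [hEc]
          exact ⟨show i - 1 + 1 = i by omega, show j ≤ c2 by omega, show c2 ≤ t by omega⟩
        · exact adjmk _ _ _ _ _ _ _ _ (by omega) (by omega) (by omega) (by omega)
        · exact part1 ⟨hnotT (i - 1) (by omega) c2 (by omega) (by omega),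
            ((⟨i, by omega⟩ : Fin m), (⟨c2, by omega⟩ : Fin n)),
            hmemT i (by omega) c2 (by omega) le_rfl his' (by omega) (by omega),
            adjmk _ _ _ _ _ _ _ _ (by omega) (by omega) (by omega) (by omega)⟩
  · -- bottom edge: row s + 1
    obtain ⟨e0, he0⟩ := hEne
    rw [hEc] at he0
    simp only [Set.mem_setOf_eq] at he0
    have he01 := e0.1.isLt
    have he02 := e0.2.isLt
    refine row_contra hP (s' + 1) s' j t' (by omega) (by omega) (by omega) (by omega)
      (Or.inr rfl) ?_ ?_ ?_ ?_ ?_ ?_ ?_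
    · exact hT.2.1 (hmemT s' (by omega) j (by omega) his' le_rfl le_rfl hjt')
    · intro c hc h1 h2
      exact part1 ⟨hnotT (s' + 1) (by omega) c hc (by omega),
        ((⟨s', by omega⟩ : Fin m), (⟨c, hc⟩ : Fin n)),
        hmemT s' (by omega) c hc his' le_rfl h1 h2,
        adjmk _ _ _ _ _ _ _ _ (by omega) (by omega) (by omega) (by omega)⟩
    · intro h1 h2
      exact part1 ⟨hnotT s' (by omega) (j - 1) h2 (by omega),
        ((⟨s', by omega⟩ : Fin m), (⟨j, by omega⟩ : Fin n)),
        hmemT s' (by omega) j (by omega) his' le_rfl le_rfl hjt',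
        adjmk _ _ _ _ _ _ _ _ (by omega) (by omega) (by omega) (by omega)⟩
    · intro h1
      exact part1 ⟨hnotT s' (by omega) (t' + 1) h1 (by omega),
        ((⟨s', by omega⟩ : Fin m), (⟨t', by omega⟩ : Fin n)),
        hmemT s' (by omega) t' (by omega) his' le_rfl hjt' le_rfl,
        adjmk _ _ _ _ _ _ _ _ (by omega) (by omega) (by omega) (by omega)⟩
    · intro h1 h2
      exact part1 ⟨hnotT (s' + 1) (by omega) (j - 1) h2 (by omega),
        ((⟨s', by omega⟩ : Fin m), (⟨j, by omega⟩ : Fin n)),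
        hmemT s' (by omega) j (by omega) his' le_rfl le_rfl hjt',
        adjmk _ _ _ _ _ _ _ _ (by omega) (by omega) (by omega) (by omega)⟩
    · intro h1
      exact part1 ⟨hnotT (s' + 1) (by omega) (t' + 1) h1 (by omega),
        ((⟨s', by omega⟩ : Fin m), (⟨t', by omega⟩ : Fin n)),
        hmemT s' (by omega) t' (by omega) his' le_rfl hjt' le_rfl,
        adjmk _ _ _ _ _ _ _ _ (by omega) (by omega) (by omega) (by omega)⟩
    · intro rF hF hne hd c hc h1 h2
      have hrF : rF = s' + 2 := by omega
      apply hNP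
      · exact hnotT rF hF c hc (by omega)
      · set c2 := min (max c j) t' with hc2
        refine ⟨((⟨s' + 1, by omega⟩ : Fin m), (⟨c2, by omega⟩ : Fin n)), ?_, ?_, ?_⟩
        · rw [hEc]
          exact ⟨show s' + 1 = s + 1 by omega, show j ≤ c2 by omega, show c2 ≤ t by omega⟩
        · exact adjmk _ _ _ _ _ _ _ _ (by omega) (by omega) (by omega) (by omega)
        · exact part1 ⟨hnotT (s' + 1) (by omega) c2 (by omega) (by omega),
            ((⟨s', by omega⟩ : Fin m), (⟨c2, by omega⟩ : Fin n)),
            hmemT s' (by omega) c2 (by omega) his' le_rfl (by omega) (by omega),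
            adjmk _ _ _ _ _ _ _ _ (by omega) (by omega) (by omega) (by omega)⟩
  · -- left edge: column j - 1
    obtain ⟨e0, he0⟩ := hEne
    rw [hEc] at he0
    simp only [Set.mem_setOf_eq] at he0
    have he01 := e0.1.isLt
    have he02 := e0.2.isLt
    refine col_contra hP (j - 1) j i s' (by omega) (by omega) (by omega) (by omega)
      (Or.inl (by omega)) ?_ ?_ ?_ ?_ ?_ ?_ ?_
    · exact hT.2.1 (hmemT i (by omega) j (by omega) le_rfl his' le_rfl hjt')
    · intro c hc h1 h2
      exact part1 ⟨hnotT c hc (j - 1) (by omega) (by omega),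
        ((⟨c, hc⟩ : Fin m), (⟨j, by omega⟩ : Fin n)),
        hmemT c hc j (by omega) h1 h2 le_rfl hjt',
        adjmk _ _ _ _ _ _ _ _ (by omega) (by omega) (by omega) (by omega)⟩
    · intro h1 h2
      exact part1 ⟨hnotT (i - 1) h2 j (by omega) (by omega),
        ((⟨i, by omega⟩ : Fin m), (⟨j, by omega⟩ : Fin n)),
        hmemT i (by omega) j (by omega) le_rfl his' le_rfl hjt',
        adjmk _ _ _ _ _ _ _ _ (by omega) (by omega) (by omega) (by omega)⟩
    · intro h1
      exact part1 ⟨hnotT (s' + 1) h1 j (by omega) (by omega),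
        ((⟨s', by omega⟩ : Fin m), (⟨j, by omega⟩ : Fin n)),
        hmemT s' (by omega) j (by omega) his' le_rfl le_rfl hjt',
        adjmk _ _ _ _ _ _ _ _ (by omega) (by omega) (by omega) (by omega)⟩
    · intro h1 h2
      exact part1 ⟨hnotT (i - 1) h2 (j - 1) (by omega) (by omega),
        ((⟨i, by omega⟩ : Fin m), (⟨j, by omega⟩ : Fin n)),
        hmemT i (by omega) j (by omega) le_rfl his' le_rfl hjt',
        adjmk _ _ _ _ _ _ _ _ (by omega) (by omega) (by omega) (by omega)⟩
    · intro h1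
      exact part1 ⟨hnotT (s' + 1) h1 (j - 1) (by omega) (by omega),
        ((⟨s', by omega⟩ : Fin m), (⟨j, by omega⟩ : Fin n)),
        hmemT s' (by omega) j (by omega) his' le_rfl le_rfl hjt',
        adjmk _ _ _ _ _ _ _ _ (by omega) (by omega) (by omega) (by omega)⟩
    · intro cF hF hne hd c hc h1 h2
      have hcF : cF + 2 = j := by omega
      apply hNP
      · exact hnotT c hc cF hF (by omega)
      · set c2 := min (max c i) s' with hc2
        refine ⟨((⟨c2, by omega⟩ : Fin m), (⟨j - 1, by omega⟩ : Fin n)), ?_, ?_, ?_⟩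
        · rw [hEc]
          exact ⟨show i ≤ c2 by omega, show c2 ≤ s by omega, show j - 1 + 1 = j by omega⟩
        · exact adjmk _ _ _ _ _ _ _ _ (by omega) (by omega) (by omega) (by omega)
        · exact part1 ⟨hnotT c2 (by omega) (j - 1) (by omega) (by omega),
            ((⟨c2, by omega⟩ : Fin m), (⟨j, by omega⟩ : Fin n)),
            hmemT c2 (by omega) j (by omega) (by omega) (by omega) le_rfl hjt',
            adjmk _ _ _ _ _ _ _ _ (by omega) (by omega) (by omega) (by omega)⟩
  · -- right edge: column t + 1
    obtain ⟨e0, he0⟩ := hEne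
    rw [hEc] at he0
    simp only [Set.mem_setOf_eq] at he0
    have he01 := e0.1.isLt
    have he02 := e0.2.isLt
    refine col_contra hP (t' + 1) t' i s' (by omega) (by omega) (by omega) (by omega)
      (Or.inr rfl) ?_ ?_ ?_ ?_ ?_ ?_ ?_
    · exact hT.2.1 (hmemT i (by omega) t' (by omega) le_rfl his' hjt' le_rfl)
    · intro c hc h1 h2
      exact part1 ⟨hnotT c hc (t' + 1) (by omega) (by omega),
        ((⟨c, hc⟩ : Fin m), (⟨t', by omega⟩ : Fin n)),
        hmemT c hc t' (by omega) h1 h2 hjt' le_rfl,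
        adjmk _ _ _ _ _ _ _ _ (by omega) (by omega) (by omega) (by omega)⟩
    · intro h1 h2
      exact part1 ⟨hnotT (i - 1) h2 t' (by omega) (by omega),
        ((⟨i, by omega⟩ : Fin m), (⟨t', by omega⟩ : Fin n)),
        hmemT i (by omega) t' (by omega) le_rfl his' hjt' le_rfl,
        adjmk _ _ _ _ _ _ _ _ (by omega) (by omega) (by omega) (by omega)⟩
    · intro h1
      exact part1 ⟨hnotT (s' + 1) h1 t' (by omega) (by omega),
        ((⟨s', by omega⟩ : Fin m), (⟨t', by omega⟩ : Fin n)),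
        hmemT s' (by omega) t' (by omega) his' le_rfl hjt' le_rfl,
        adjmk _ _ _ _ _ _ _ _ (by omega) (by omega) (by omega) (by omega)⟩
    · intro h1 h2
      exact part1 ⟨hnotT (i - 1) h2 (t' + 1) (by omega) (by omega),
        ((⟨i, by omega⟩ : Fin m), (⟨t', by omega⟩ : Fin n)),
        hmemT i (by omega) t' (by omega) le_rfl his' hjt' le_rfl,
        adjmk _ _ _ _ _ _ _ _ (by omega) (by omega) (by omega) (by omega)⟩
    · intro h1
      exact part1 ⟨hnotT (s' + 1) h1 (t' + 1) (by omega) (by omega),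
        ((⟨s', by omega⟩ : Fin m), (⟨t', by omega⟩ : Fin n)),
        hmemT s' (by omega) t' (by omega) his' le_rfl hjt' le_rfl,
        adjmk _ _ _ _ _ _ _ _ (by omega) (by omega) (by omega) (by omega)⟩
    · intro cF hF hne hd c hc h1 h2
      have hcF : cF = t' + 2 := by omega
      apply hNP
      · exact hnotT c hc cF hF (by omega)
      · set c2 := min (max c i) s' with hc2
        refine ⟨((⟨c2, by omega⟩ : Fin m), (⟨t' + 1, by omega⟩ : Fin n)), ?_, ?_, ?_⟩
        · rw [hEc]
          exact ⟨show i ≤ c2 by omega, show c2 ≤ s by omega, show t' + 1 = t + 1 by omega⟩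
        · exact adjmk _ _ _ _ _ _ _ _ (by omega) (by omega) (by omega) (by omega)
        · exact part1 ⟨hnotT c2 (by omega) (t' + 1) (by omega) (by omega),
            ((⟨c2, by omega⟩ : Fin m), (⟨t', by omega⟩ : Fin n)),
            hmemT c2 (by omega) t' (by omega) (by omega) (by omega) hjt' le_rfl,
            adjmk _ _ _ _ _ _ _ _ (by omega) (by omega) (by omega) (by omega)⟩
end

section
/- Let P be a minimal prime ideal of I_mn(2). If the height-one rectangle {i}×{j,…,s} is a connected component of N_P, then for no t ≥ s+2 is {i}×{s+2,…,t} a connected component of N_P; that is, N_P has no two height-one components in the same row separated by exactly one column. Similarly, if the width-one rectangle {j,…,s}×{i} (positions (j,i),…,(s,i)) is a connected component of N_P, then for no t ≥ s+2 is {s+2,…,t}×{i} a connected component of N_P. -/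
open MvPolynomial

lemma gridAdj_mk {m n : ℕ} {a1 a2 b1 b2 : ℕ} (ha1 : a1 < m) (ha2 : a2 < m)
    (hb1 : b1 < n) (hb2 : b2 < n) (c1 : a1 ≤ a2 + 1) (c2 : a2 ≤ a1 + 1)
    (c3 : b1 ≤ b2 + 1) (c4 : b2 ≤ b1 + 1) :
    gridAdj ((⟨a1, ha1⟩, ⟨b1, hb1⟩) : Fin m × Fin n) (⟨a2, ha2⟩, ⟨b2, hb2⟩) :=
  ⟨c1, c2, c3, c4⟩

lemma boundary_mem {K : Type*} [Field K] {m n : ℕ}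
    {P : Ideal (MvPolynomial (Fin m × Fin n) K)}
    {T : Set (Fin m × Fin n)} (hT : IsComponent (NP P) T)
    {q p : Fin m × Fin n} (hq : q ∉ T) (hp : p ∈ T) (hadj : gridAdj q p) :
    X q ∈ P := by
  by_contra h
  obtain ⟨hne, hsub, hconn, hmax⟩ := hT
  set T' : Set (Fin m × Fin n) := insert q T with hT'
  have hqT' : q ∈ T' := Set.mem_insert _ _
  have hTT' : T ⊆ T' := Set.subset_insert _ _
  have hsub' : T' ⊆ NP P := Set.insert_subset h hsub
  have hsymm : Symmetric (fun x y => gridAdj x y ∧ x ∈ T' ∧ y ∈ T') :=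
    fun x y hxy => ⟨gridAdj_symm hxy.1, hxy.2.2, hxy.2.1⟩
  have key : ∀ a ∈ T, Relation.ReflTransGen
      (fun x y => gridAdj x y ∧ x ∈ T' ∧ y ∈ T') a q := by
    intro a ha
    have h1 : Relation.ReflTransGen (fun x y => gridAdj x y ∧ x ∈ T' ∧ y ∈ T') a p :=
      Relation.ReflTransGen.mono (fun x y hxy => ⟨hxy.1, hTT' hxy.2.1, hTT' hxy.2.2⟩) _ _ (hconn a ha p hp)
    exact h1.tail ⟨gridAdj_symm hadj, hTT' hp, hqT'⟩
  have hconn' : ConnectedIn T' := by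
    intro x hx y hy
    rcases hx with hx | hx
    · rcases hy with hy | hy
      · subst hx; subst hy; exact Relation.ReflTransGen.refl
      · subst hx; exact (@Relation.ReflTransGen.stdSymm _ _ ⟨fun a b h => hsymm h⟩).symm _ _ (key y hy)
    · rcases hy with hy | hy
      · subst hy; exact key x hx
      · exact Relation.ReflTransGen.mono (fun a b hab => ⟨hab.1, hTT' hab.2.1, hTT' hab.2.2⟩) _ _ (hconn x hx y hy)
  have := hmax T' hTT' hsub' hconn'
  exact hq (this ▸ hqT')

noncomputable def theta {K : Type*} [Field K] {m n : ℕ}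
    (P : Ideal (MvPolynomial (Fin m × Fin n) K)) (w : Fin m × Fin n) :
    MvPolynomial (Fin m × Fin n) K →ₐ[K] Polynomial (MvPolynomial (Fin m × Fin n) K ⧸ P) :=
  aeval fun q => if q = w then Polynomial.X else Polynomial.C (Ideal.Quotient.mk P (X q))

lemma theta_X {K : Type*} [Field K] {m n : ℕ}
    (P : Ideal (MvPolynomial (Fin m × Fin n) K)) (w q : Fin m × Fin n) :
    theta P w (X q) = if q = w then Polynomial.X
      else Polynomial.C (Ideal.Quotient.mk P (X q)) :=
  aeval_X _ _

set_option maxHeartbeats 1000000 in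
lemma key_lemma {K : Type*} [Field K] {m n : ℕ}
    {P : Ideal (MvPolynomial (Fin m × Fin n) K)}
    (hP : P ∈ (adjMinors2Ideal K m n).minimalPrimes)
    (w : Fin m × Fin n) (hw : X w ∈ P)
    (hnb : (∀ q : Fin m × Fin n, gridAdj q w → q.1.1 ≠ w.1.1 → X q ∈ P) ∨
           (∀ q : Fin m × Fin n, gridAdj q w → q.2.1 ≠ w.2.1 → X q ∈ P)) :
    False := by
  haveI hPp : P.IsPrime := hP.1.1
  -- I ≤ ker θ
  have hIQ : adjMinors2Ideal K m n ≤ RingHom.ker (theta P w) := by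
    rw [adjMinors2Ideal, Ideal.span_le]
    rintro f ⟨a, b, ha, hb, rfl⟩
    have hfP : (X (⟨a, by omega⟩, ⟨b, by omega⟩) * X (⟨a + 1, ha⟩, ⟨b + 1, hb⟩)
      - X (⟨a, by omega⟩, ⟨b + 1, hb⟩) * X ((⟨a + 1, ha⟩ : Fin m), (⟨b, by omega⟩ : Fin n))) ∈ P :=
      hP.1.2 (Ideal.subset_span ⟨a, b, ha, hb, rfl⟩)
    simp only [SetLike.mem_coe, RingHom.mem_ker, map_sub, map_mul, theta_X]
    set z := fun (q : Fin m × Fin n) (h : X q ∈ P) =>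
      Ideal.Quotient.eq_zero_iff_mem.mpr h with hz
    by_cases h1 : ((⟨a, by omega⟩, ⟨b, by omega⟩) : Fin m × Fin n) = w
    · subst h1
      have h2P : X ((⟨a + 1, ha⟩ : Fin m), (⟨b + 1, hb⟩ : Fin n)) ∈ P := by
        rcases hnb with hr | hc
        · exact hr _ (gridAdj_mk _ _ _ _ (by omega) (by omega) (by omega) (by omega))
            (show a + 1 ≠ a by omega)
        · exact hc _ (gridAdj_mk _ _ _ _ (by omega) (by omega) (by omega) (by omega))
            (show b + 1 ≠ b by omega)
      have h34 : X ((⟨a, by omega⟩ : Fin m), (⟨b + 1, hb⟩ : Fin n)) ∈ P ∨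
          X ((⟨a + 1, ha⟩ : Fin m), (⟨b, by omega⟩ : Fin n)) ∈ P := by
        rcases hnb with hr | hc
        · exact Or.inr (hr _ (gridAdj_mk _ _ _ _ (by omega) (by omega) (by omega) (by omega))
            (show a + 1 ≠ a by omega))
        · exact Or.inl (hc _ (gridAdj_mk _ _ _ _ (by omega) (by omega) (by omega) (by omega))
            (show b + 1 ≠ b by omega))
      have ne2 : ((⟨a + 1, ha⟩ : Fin m), (⟨b + 1, hb⟩ : Fin n)) ≠ (⟨a, by omega⟩, ⟨b, by omega⟩) :=
        fun h => Nat.succ_ne_self a (congrArg (fun p => p.1.1) h)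
      have ne3 : ((⟨a, by omega⟩ : Fin m), (⟨b + 1, hb⟩ : Fin n)) ≠ (⟨a, by omega⟩, ⟨b, by omega⟩) :=
        fun h => Nat.succ_ne_self b (congrArg (fun p => p.2.1) h)
      have ne4 : ((⟨a + 1, ha⟩ : Fin m), (⟨b, by omega⟩ : Fin n)) ≠ (⟨a, by omega⟩, ⟨b, by omega⟩) :=
        fun h => Nat.succ_ne_self a (congrArg (fun p => p.1.1) h)
      rw [if_pos rfl, if_neg ne2, if_neg ne3, if_neg ne4, z _ h2P]
      rcases h34 with h | h <;> rw [z _ h] <;> simp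
    · by_cases h2 : ((⟨a + 1, ha⟩ : Fin m), (⟨b + 1, hb⟩ : Fin n)) = w
      · subst h2
        have h1P : X ((⟨a, by omega⟩ : Fin m), (⟨b, by omega⟩ : Fin n)) ∈ P := by
          rcases hnb with hr | hc
          · exact hr _ (gridAdj_mk _ _ _ _ (by omega) (by omega) (by omega) (by omega))
              (show a ≠ a + 1 by omega)
          · exact hc _ (gridAdj_mk _ _ _ _ (by omega) (by omega) (by omega) (by omega))
              (show b ≠ b + 1 by omega)
        have h34 : X ((⟨a, by omega⟩ : Fin m), (⟨b + 1, hb⟩ : Fin n)) ∈ P ∨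
            X ((⟨a + 1, ha⟩ : Fin m), (⟨b, by omega⟩ : Fin n)) ∈ P := by
          rcases hnb with hr | hc
          · exact Or.inl (hr _ (gridAdj_mk _ _ _ _ (by omega) (by omega) (by omega) (by omega))
              (show a ≠ a + 1 by omega))
          · exact Or.inr (hc _ (gridAdj_mk _ _ _ _ (by omega) (by omega) (by omega) (by omega))
              (show b ≠ b + 1 by omega))
        have ne3 : ((⟨a, by omega⟩ : Fin m), (⟨b + 1, hb⟩ : Fin n)) ≠ (⟨a + 1, ha⟩, ⟨b + 1, hb⟩) :=
          fun h => Nat.succ_ne_self a ((congrArg (fun p => p.1.1) h).symm)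
        have ne4 : ((⟨a + 1, ha⟩ : Fin m), (⟨b, by omega⟩ : Fin n)) ≠ (⟨a + 1, ha⟩, ⟨b + 1, hb⟩) :=
          fun h => Nat.succ_ne_self b ((congrArg (fun p => p.2.1) h).symm)
        rw [if_neg h1, if_pos rfl, if_neg ne3, if_neg ne4, z _ h1P]
        rcases h34 with h | h <;> rw [z _ h] <;> simp
      · by_cases h3 : ((⟨a, by omega⟩ : Fin m), (⟨b + 1, hb⟩ : Fin n)) = w
        · subst h3
          have h4P : X ((⟨a + 1, ha⟩ : Fin m), (⟨b, by omega⟩ : Fin n)) ∈ P := by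
            rcases hnb with hr | hc
            · exact hr _ (gridAdj_mk _ _ _ _ (by omega) (by omega) (by omega) (by omega))
                (show a + 1 ≠ a by omega)
            · exact hc _ (gridAdj_mk _ _ _ _ (by omega) (by omega) (by omega) (by omega))
                (show b ≠ b + 1 by omega)
          have h12 : X ((⟨a, by omega⟩ : Fin m), (⟨b, by omega⟩ : Fin n)) ∈ P ∨
              X ((⟨a + 1, ha⟩ : Fin m), (⟨b + 1, hb⟩ : Fin n)) ∈ P := by
            rcases hnb with hr | hc
            · exact Or.inr (hr _ (gridAdj_mk _ _ _ _ (by omega) (by omega) (by omega) (by omega))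
                (show a + 1 ≠ a by omega))
            · exact Or.inl (hc _ (gridAdj_mk _ _ _ _ (by omega) (by omega) (by omega) (by omega))
                (show b ≠ b + 1 by omega))
          have ne4 : ((⟨a + 1, ha⟩ : Fin m), (⟨b, by omega⟩ : Fin n)) ≠ (⟨a, by omega⟩, ⟨b + 1, hb⟩) :=
            fun h => Nat.succ_ne_self a (congrArg (fun p => p.1.1) h)
          rw [if_neg h1, if_neg h2, if_pos rfl, if_neg ne4, z _ h4P]
          rcases h12 with h | h <;> rw [z _ h] <;> simp
        · by_cases h4 : ((⟨a + 1, ha⟩ : Fin m), (⟨b, by omega⟩ : Fin n)) = w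
          · subst h4
            have h3P : X ((⟨a, by omega⟩ : Fin m), (⟨b + 1, hb⟩ : Fin n)) ∈ P := by
              rcases hnb with hr | hc
              · exact hr _ (gridAdj_mk _ _ _ _ (by omega) (by omega) (by omega) (by omega))
                  (show a ≠ a + 1 by omega)
              · exact hc _ (gridAdj_mk _ _ _ _ (by omega) (by omega) (by omega) (by omega))
                  (show b + 1 ≠ b by omega)
            have h12 : X ((⟨a, by omega⟩ : Fin m), (⟨b, by omega⟩ : Fin n)) ∈ P ∨
                X ((⟨a + 1, ha⟩ : Fin m), (⟨b + 1, hb⟩ : Fin n)) ∈ P := by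
              rcases hnb with hr | hc
              · exact Or.inl (hr _ (gridAdj_mk _ _ _ _ (by omega) (by omega) (by omega) (by omega))
                  (show a ≠ a + 1 by omega))
              · exact Or.inr (hc _ (gridAdj_mk _ _ _ _ (by omega) (by omega) (by omega) (by omega))
                  (show b + 1 ≠ b by omega))
            rw [if_neg h1, if_neg h2, if_neg h3, if_pos rfl, z _ h3P]
            rcases h12 with h | h <;> rw [z _ h] <;> simp
          · rw [if_neg h1, if_neg h2, if_neg h3, if_neg h4, ← Polynomial.C_mul,
              ← Polynomial.C_mul, ← Polynomial.C_sub, ← map_mul, ← map_mul, ← map_sub,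
              Ideal.Quotient.eq_zero_iff_mem.mpr hfP, map_zero]
  -- ker θ ≤ P
  have hQP : RingHom.ker (theta P w) ≤ P := by
    intro f hf
    rw [RingHom.mem_ker] at hf
    have hcomp : (((Polynomial.aeval (Ideal.Quotient.mk P (X w))).restrictScalars K).comp
        (theta P w)) = Ideal.Quotient.mkₐ K P := by
      apply MvPolynomial.algHom_ext
      intro q
      by_cases hq : q = w
      · subst hq
        simp [theta_X]
      · simp [theta_X, hq]
    have := congrArg (fun g => g f) hcomp
    simp only [AlgHom.comp_apply, AlgHom.coe_restrictScalars', Ideal.Quotient.mkₐ_eq_mk] at this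
    rw [hf, map_zero] at this
    exact Ideal.Quotient.eq_zero_iff_mem.mp this.symm
  -- X w ∉ ker θ
  have hzQ : X w ∉ RingHom.ker (theta P w) := by
    rw [RingHom.mem_ker, theta_X, if_pos rfl]
    exact Polynomial.X_ne_zero
  have hker : (RingHom.ker (theta P w)).IsPrime := RingHom.ker_isPrime _
  exact hzQ (hP.2 ⟨hker, hIQ⟩ hQP hw)

theorem no_two_thin_components_separated_by_one
    (K : Type*) [Field K] (m n : ℕ) (hm : 2 ≤ m) (hn : 2 ≤ n)
    (P : Ideal (MvPolynomial (Fin m × Fin n) K))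
    (hP : P ∈ (adjMinors2Ideal K m n).minimalPrimes) :
    (∀ i j s t : ℕ,
      IsComponent (NP P) {p : Fin m × Fin n | p.1.1 = i ∧ j ≤ p.2.1 ∧ p.2.1 ≤ s} →
      ¬ IsComponent (NP P) {p : Fin m × Fin n | p.1.1 = i ∧ s + 2 ≤ p.2.1 ∧ p.2.1 ≤ t}) ∧
    (∀ i j s t : ℕ,
      IsComponent (NP P) {p : Fin m × Fin n | p.2.1 = i ∧ j ≤ p.1.1 ∧ p.1.1 ≤ s} →
      ¬ IsComponent (NP P) {p : Fin m × Fin n | p.2.1 = i ∧ s + 2 ≤ p.1.1 ∧ p.1.1 ≤ t}) := by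
  constructor
  · intro i j s t h1 h2
    obtain ⟨p0, hp0⟩ := h2.1
    obtain ⟨pp, hpp⟩ := h1.1
    have him : i < m := hp0.1 ▸ p0.1.isLt
    have hs2 : s + 2 < n := lt_of_le_of_lt hp0.2.1 p0.2.isLt
    have hjs : j ≤ s := le_trans hpp.2.1 hpp.2.2
    have hst : s + 2 ≤ t := le_trans hp0.2.1 hp0.2.2
    have pA_mem : ((⟨i, him⟩ : Fin m), (⟨s, by omega⟩ : Fin n)) ∈
        {p : Fin m × Fin n | p.1.1 = i ∧ j ≤ p.2.1 ∧ p.2.1 ≤ s} := ⟨rfl, hjs, le_refl s⟩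
    have pB_mem : ((⟨i, him⟩ : Fin m), (⟨s + 2, hs2⟩ : Fin n)) ∈
        {p : Fin m × Fin n | p.1.1 = i ∧ s + 2 ≤ p.2.1 ∧ p.2.1 ≤ t} :=
      ⟨rfl, le_refl _, hst⟩
    have hwnot : ((⟨i, him⟩ : Fin m), (⟨s + 1, by omega⟩ : Fin n)) ∉
        {p : Fin m × Fin n | p.1.1 = i ∧ j ≤ p.2.1 ∧ p.2.1 ≤ s} :=
      fun h => Nat.not_succ_le_self s h.2.2
    have hwP : X ((⟨i, him⟩ : Fin m), (⟨s + 1, by omega⟩ : Fin n)) ∈ P :=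
      boundary_mem h1 hwnot pA_mem
        (gridAdj_mk _ _ _ _ (by omega) (by omega) (by omega) (by omega))
    apply key_lemma hP ((⟨i, him⟩ : Fin m), (⟨s + 1, by omega⟩ : Fin n)) hwP
    left
    rintro ⟨⟨qi, hqi⟩, ⟨qj, hqj⟩⟩ hadj hne
    have c1 : qi ≤ i + 1 := hadj.1
    have c2 : i ≤ qi + 1 := hadj.2.1
    have c3 : qj ≤ s + 1 + 1 := hadj.2.2.1
    have c4 : s + 1 ≤ qj + 1 := hadj.2.2.2
    have hne' : qi ≠ i := hne
    by_cases hcase : qj ≤ s + 1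
    · exact boundary_mem h1 (fun hmem => hne' hmem.1) pA_mem
        (gridAdj_mk _ _ _ _ (by omega) (by omega) (by omega) (by omega))
    · exact boundary_mem h2 (fun hmem => hne' hmem.1) pB_mem
        (gridAdj_mk _ _ _ _ (by omega) (by omega) (by omega) (by omega))
  · intro i j s t h1 h2
    obtain ⟨p0, hp0⟩ := h2.1
    obtain ⟨pp, hpp⟩ := h1.1
    have him : i < n := hp0.1 ▸ p0.2.isLt
    have hs2 : s + 2 < m := lt_of_le_of_lt hp0.2.1 p0.1.isLt
    have hjs : j ≤ s := le_trans hpp.2.1 hpp.2.2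
    have hst : s + 2 ≤ t := le_trans hp0.2.1 hp0.2.2
    have pA_mem : ((⟨s, by omega⟩ : Fin m), (⟨i, him⟩ : Fin n)) ∈
        {p : Fin m × Fin n | p.2.1 = i ∧ j ≤ p.1.1 ∧ p.1.1 ≤ s} := ⟨rfl, hjs, le_refl s⟩
    have pB_mem : ((⟨s + 2, hs2⟩ : Fin m), (⟨i, him⟩ : Fin n)) ∈
        {p : Fin m × Fin n | p.2.1 = i ∧ s + 2 ≤ p.1.1 ∧ p.1.1 ≤ t} :=
      ⟨rfl, le_refl _, hst⟩
    have hwnot : ((⟨s + 1, by omega⟩ : Fin m), (⟨i, him⟩ : Fin n)) ∉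
        {p : Fin m × Fin n | p.2.1 = i ∧ j ≤ p.1.1 ∧ p.1.1 ≤ s} :=
      fun h => Nat.not_succ_le_self s h.2.2
    have hwP : X ((⟨s + 1, by omega⟩ : Fin m), (⟨i, him⟩ : Fin n)) ∈ P :=
      boundary_mem h1 hwnot pA_mem
        (gridAdj_mk _ _ _ _ (by omega) (by omega) (by omega) (by omega))
    apply key_lemma hP ((⟨s + 1, by omega⟩ : Fin m), (⟨i, him⟩ : Fin n)) hwP
    right
    rintro ⟨⟨qi, hqi⟩, ⟨qj, hqj⟩⟩ hadj hne
    have c1 : qi ≤ s + 1 + 1 := hadj.1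
    have c2 : s + 1 ≤ qi + 1 := hadj.2.1
    have c3 : qj ≤ i + 1 := hadj.2.2.1
    have c4 : i ≤ qj + 1 := hadj.2.2.2
    have hne' : qj ≠ i := hne
    by_cases hcase : qi ≤ s + 1
    · exact boundary_mem h1 (fun hmem => hne' hmem.1) pA_mem
        (gridAdj_mk _ _ _ _ (by omega) (by omega) (by omega) (by omega))
    · exact boundary_mem h2 (fun hmem => hne' hmem.1) pB_mem
        (gridAdj_mk _ _ _ _ (by omega) (by omega) (by omega) (by omega))
end

section
/- The ideal I_mn(m) of adjacent maximal minors is a radical ideal of R. -/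
open MvPolynomial

/-- The adjacent maximal minor of the generic `m × n` matrix starting at
(0-based) column `c`: the determinant of the `m × m` submatrix on columns
`c, c+1, …, c+m-1`. -/
noncomputable def adjMaxMinor (K : Type*) [Field K] (m n : ℕ) (c : ℕ) (hc : c + m ≤ n) :
    MvPolynomial (Fin m × Fin n) K :=
  (Matrix.of fun i j : Fin m =>
    X (i, (⟨c + j.1, by have := j.2; omega⟩ : Fin n))).det

/-- The ideal `I_mn(m)` generated by the `n - m + 1` adjacent maximal minors. -/
noncomputable def adjMaxIdeal (K : Type*) [Field K] (m n : ℕ) :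
    Ideal (MvPolynomial (Fin m × Fin n) K) :=
  Ideal.span {f | ∃ (c : ℕ) (hc : c + m ≤ n), f = adjMaxMinor K m n c hc}

set_option linter.unusedSectionVars false
set_option maxHeartbeats 1000000

namespace AdjRad
variable {σ : Type*} [DecidableEq σ] {K : Type*} [Field K] {mo : MonomialOrder σ}

noncomputable def ms (mo : MonomialOrder σ) (f : MvPolynomial σ K) : mo.syn :=
  f.support.sup (fun e => mo.toSyn e)
noncomputable def lexp (mo : MonomialOrder σ) (f : MvPolynomial σ K) : σ →₀ ℕ :=
  mo.toSyn.symm (ms mo f)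
noncomputable def lc (mo : MonomialOrder σ) (f : MvPolynomial σ K) : K := f.coeff (lexp mo f)

theorem toSyn_lexp (f : MvPolynomial σ K) : mo.toSyn (lexp mo f) = ms mo f :=
  mo.toSyn.apply_symm_apply _
theorem le_ms {f : MvPolynomial σ K} {e : σ →₀ ℕ} (he : e ∈ f.support) :
    mo.toSyn e ≤ ms mo f := Finset.le_sup he
theorem coeff_eq_zero_of_ms_lt {f : MvPolynomial σ K} {e : σ →₀ ℕ} (h : ms mo f < mo.toSyn e) :
    f.coeff e = 0 := by
  by_contra hc
  exact absurd (le_ms (MvPolynomial.mem_support_iff.mpr hc)) (not_le.mpr h)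
theorem eq_lexp_of_toSyn_eq {f : MvPolynomial σ K} {e : σ →₀ ℕ} (h : mo.toSyn e = ms mo f) :
    e = lexp mo f := by
  apply mo.toSyn.injective; rw [toSyn_lexp, h]
theorem lexp_mem {f : MvPolynomial σ K} (hf : f ≠ 0) : lexp mo f ∈ f.support := by
  obtain ⟨e, he, hs⟩ := Finset.exists_mem_eq_sup f.support
    (MvPolynomial.support_nonempty.mpr hf) (fun e => mo.toSyn e)
  rwa [← eq_lexp_of_toSyn_eq hs.symm]
theorem lc_ne_zero {f : MvPolynomial σ K} (hf : f ≠ 0) : lc mo f ≠ 0 :=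
  MvPolynomial.mem_support_iff.mp (lexp_mem hf)
theorem ms_le_of_forall {f : MvPolynomial σ K} {s : mo.syn}
    (h : ∀ e ∈ f.support, mo.toSyn e ≤ s) : ms mo f ≤ s := Finset.sup_le h

/-- `ble f s`: all monomials of `f` have order `≤ s`. -/
def ble (mo : MonomialOrder σ) (f : MvPolynomial σ K) (s : mo.syn) : Prop :=
  ∀ e ∈ f.support, mo.toSyn e ≤ s
/-- `blt f s`: all monomials of `f` have order `< s`. -/
def blt (mo : MonomialOrder σ) (f : MvPolynomial σ K) (s : mo.syn) : Prop :=
  ∀ e ∈ f.support, mo.toSyn e < s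

theorem ble_self (f : MvPolynomial σ K) : ble mo f (ms mo f) := fun _ he => le_ms he
theorem ble_of_le {f : MvPolynomial σ K} {s t : mo.syn} (h : ble mo f s) (hst : s ≤ t) :
    ble mo f t := fun e he => le_trans (h e he) hst
theorem blt.ble {f : MvPolynomial σ K} {s : mo.syn} (h : blt mo f s) : ble mo f s :=
  fun e he => le_of_lt (h e he)
theorem ble_ms_iff {f : MvPolynomial σ K} {s : mo.syn} : ble mo f s ↔ ms mo f ≤ s :=
  ⟨Finset.sup_le, fun h e he => le_trans (le_ms he) h⟩

theorem ms_lt_of_blt {f : MvPolynomial σ K} {s : mo.syn} (hf : f ≠ 0) (h : blt mo f s) :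
    ms mo f < s := by
  rw [← toSyn_lexp]; exact h _ (lexp_mem hf)

theorem blt_add {f g : MvPolynomial σ K} {s : mo.syn} (hf : blt mo f s) (hg : blt mo g s) :
    blt mo (f + g) s := fun e he => by
  rcases Finset.mem_union.mp (MvPolynomial.support_add he) with h | h
  exacts [hf e h, hg e h]

theorem blt_sub {f g : MvPolynomial σ K} {s : mo.syn} (hf : blt mo f s) (hg : blt mo g s) :
    blt mo (f - g) s := by
  rw [sub_eq_add_neg]
  refine blt_add hf (fun e he => hg e ?_)
  rwa [MvPolynomial.support_neg] at he

theorem ble_add {f g : MvPolynomial σ K} {s : mo.syn} (hf : ble mo f s) (hg : ble mo g s) :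
    ble mo (f + g) s := fun e he => by
  rcases Finset.mem_union.mp (MvPolynomial.support_add he) with h | h
  exacts [hf e h, hg e h]

theorem ble_mul {f g : MvPolynomial σ K} {s t : mo.syn} (hf : ble mo f s) (hg : ble mo g t) :
    ble mo (f * g) (s + t) := by
  intro e he
  obtain ⟨a, ha, b, hb, rfl⟩ := Finset.mem_add.mp (MvPolynomial.support_mul f g he)
  rw [map_add]
  exact add_le_add (hf a ha) (hg b hb)

theorem blt_mul_ble {f g : MvPolynomial σ K} {s t : mo.syn} (hf : blt mo f s) (hg : ble mo g t) :
    blt mo (f * g) (s + t) := by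
  intro e he
  obtain ⟨a, ha, b, hb, rfl⟩ := Finset.mem_add.mp (MvPolynomial.support_mul f g he)
  rw [map_add]
  exact add_lt_add_of_lt_of_le (hf a ha) (hg b hb)

theorem ble_mul_blt {f g : MvPolynomial σ K} {s t : mo.syn} (hf : ble mo f s) (hg : blt mo g t) :
    blt mo (f * g) (s + t) := by
  intro e he
  obtain ⟨a, ha, b, hb, rfl⟩ := Finset.mem_add.mp (MvPolynomial.support_mul f g he)
  rw [map_add]
  exact add_lt_add_of_le_of_lt (hf a ha) (hg b hb)

theorem ble_monomial (a : σ →₀ ℕ) (c : K) : ble mo (monomial a c) (mo.toSyn a) := by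
  intro e he
  rcases (Finset.mem_singleton.mp (MvPolynomial.support_monomial_subset he)) with rfl
  exact le_rfl

/-- removing the leading term strictly drops all remaining monomials below `ms`. -/
theorem blt_sub_leadTerm (f : MvPolynomial σ K) :
    blt mo (f - monomial (lexp mo f) (lc mo f)) (ms mo f) := by
  intro e he
  rcases lt_trichotomy (mo.toSyn e) (ms mo f) with h | h | h
  · exact h
  · exfalso
    rcases eq_lexp_of_toSyn_eq h with rfl
    rw [MvPolynomial.mem_support_iff] at he
    apply he
    rw [MvPolynomial.coeff_sub, MvPolynomial.coeff_monomial, if_pos rfl]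
    exact sub_eq_zero_of_eq rfl
  · exfalso
    rw [MvPolynomial.mem_support_iff] at he
    apply he
    have h1 : f.coeff e = 0 := coeff_eq_zero_of_ms_lt h
    have h2 : (monomial (lexp mo f) (lc mo f)).coeff e = 0 := by
      rw [MvPolynomial.coeff_monomial, if_neg]
      rintro rfl
      rw [toSyn_lexp] at h
      exact lt_irrefl _ h
    rw [MvPolynomial.coeff_sub, h1, h2, sub_self]

theorem ms_mul {f g : MvPolynomial σ K} (hf : f ≠ 0) (hg : g ≠ 0) :
    ms mo (f * g) = ms mo f + ms mo g ∧
    lexp mo (f * g) = lexp mo f + lexp mo g ∧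
    lc mo (f * g) = lc mo f * lc mo g := by
  have hcoeff : (f * g).coeff (lexp mo f + lexp mo g) = lc mo f * lc mo g := by
    rw [MvPolynomial.coeff_mul]
    rw [Finset.sum_eq_single_of_mem (lexp mo f, lexp mo g)
        (Finset.HasAntidiagonal.mem_antidiagonal.mpr rfl)]
    · rfl
    · rintro ⟨x, y⟩ hxy hne
      rw [Finset.HasAntidiagonal.mem_antidiagonal] at hxy
      by_contra hc
      have hx : f.coeff x ≠ 0 := fun h => hc (by simp [h])
      have hy : g.coeff y ≠ 0 := fun h => hc (by simp [h])
      have hx' : mo.toSyn x ≤ ms mo f := le_ms (MvPolynomial.mem_support_iff.mpr hx)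
      have hy' : mo.toSyn y ≤ ms mo g := le_ms (MvPolynomial.mem_support_iff.mpr hy)
      have hsum : mo.toSyn x + mo.toSyn y = ms mo f + ms mo g := by
        rw [← map_add, hxy, map_add, toSyn_lexp, toSyn_lexp]
      have hxe : mo.toSyn x = ms mo f := by
        by_contra hxe
        exact absurd hsum (ne_of_lt (add_lt_add_of_lt_of_le (lt_of_le_of_ne hx' hxe) hy'))
      have hye : mo.toSyn y = ms mo g := by
        have := hsum
        rw [hxe] at this
        exact add_left_cancel this
      exact hne (Prod.ext (eq_lexp_of_toSyn_eq hxe) (eq_lexp_of_toSyn_eq hye))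
  have hne : lc mo f * lc mo g ≠ 0 := mul_ne_zero (lc_ne_zero hf) (lc_ne_zero hg)
  have hmem : lexp mo f + lexp mo g ∈ (f * g).support := by
    rw [MvPolynomial.mem_support_iff, hcoeff]; exact hne
  have hle : ms mo (f * g) ≤ ms mo f + ms mo g := by
    refine ms_le_of_forall fun e he => ?_
    obtain ⟨a, ha, b, hb, rfl⟩ := Finset.mem_add.mp (MvPolynomial.support_mul f g he)
    rw [map_add]
    exact add_le_add (le_ms ha) (le_ms hb)
  have hge : mo.toSyn (lexp mo f + lexp mo g) ≤ ms mo (f * g) := le_ms hmem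
  have hms : ms mo (f * g) = ms mo f + ms mo g := by
    refine le_antisymm hle ?_
    rwa [map_add, toSyn_lexp, toSyn_lexp] at hge
  have hlexp : lexp mo (f * g) = lexp mo f + lexp mo g := by
    refine (eq_lexp_of_toSyn_eq ?_).symm
    rw [map_add, toSyn_lexp, toSyn_lexp, hms]
  refine ⟨hms, hlexp, ?_⟩
  rw [lc, hlexp, hcoeff]


theorem ms_zero : ms mo (0 : MvPolynomial σ K) = 0 := by
  rw [← MonomialOrder.bot_eq_zero]
  rfl

theorem zero_le_syn (s : mo.syn) : 0 ≤ s := by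
  rw [← MonomialOrder.bot_eq_zero]; exact bot_le

theorem exists_lexp_le_of_mem_span {ι : Type*} [Fintype ι] [Nonempty ι]
    {g : ι → MvPolynomial σ K} (hg : ∀ i, g i ≠ 0)
    (hdisj : ∀ i j, i ≠ j → ∀ v, lexp mo (g i) v = 0 ∨ lexp mo (g j) v = 0)
    {f : MvPolynomial σ K} (hf : f ∈ Ideal.span (Set.range g)) (hf0 : f ≠ 0) :
    ∃ i, lexp mo (g i) ≤ lexp mo f := by
  classical
  set T : Set mo.syn := {t | ∃ h : ι → MvPolynomial σ K,
    (∑ i, h i * g i) = f ∧ Finset.univ.sup (fun i => ms mo (h i * g i)) = t} with hTdef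
  have hTne : T.Nonempty := by
    obtain ⟨h, hh⟩ := (Submodule.mem_span_range_iff_exists_fun (MvPolynomial σ K)).mp hf
    exact ⟨_, h, by simpa [smul_eq_mul] using hh, rfl⟩
  set t₀ := WellFounded.min (wellFounded_lt) T hTne with ht₀def
  have ht₀T : t₀ ∈ T := WellFounded.min_mem _ _ _
  have ht₀min : ∀ t ∈ T, ¬ t < t₀ := fun t ht => WellFounded.not_lt_min _ _ ht
  set N : Set ℕ := {k | ∃ h : ι → MvPolynomial σ K, (∑ i, h i * g i) = f ∧
    Finset.univ.sup (fun i => ms mo (h i * g i)) = t₀ ∧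
    (Finset.univ.filter (fun i => h i * g i ≠ 0 ∧ ms mo (h i * g i) = t₀)).card = k}
    with hNdef
  have hNne : N.Nonempty := by
    obtain ⟨h, h1, h2⟩ := ht₀T
    exact ⟨_, h, h1, h2, rfl⟩
  set k₀ := WellFounded.min (wellFounded_lt) N hNne with hk₀def
  have hkmin : ∀ k ∈ N, ¬ k < k₀ := fun k hk => WellFounded.not_lt_min _ _ hk
  obtain ⟨h, hsum, hsup, hcard⟩ : k₀ ∈ N := WellFounded.min_mem _ _ _
  set S := (Finset.univ.filter (fun i => h i * g i ≠ 0 ∧ ms mo (h i * g i) = t₀)) with hSdef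
  set D := mo.toSyn.symm t₀ with hDdef
  have hDsyn : mo.toSyn D = t₀ := mo.toSyn.apply_symm_apply _
  have hmsle : ∀ i, ms mo (h i * g i) ≤ t₀ := fun i => by
    rw [← hsup]
    exact Finset.le_sup (f := fun i => ms mo (h i * g i)) (Finset.mem_univ i)
  have hcoefff : ∀ e, f.coeff e = ∑ i, (h i * g i).coeff e := by
    intro e; rw [← hsum, MvPolynomial.coeff_sum]
  have hcoeff_top : ∀ i, i ∉ S → (h i * g i).coeff D = 0 := by
    intro i hi
    rw [hSdef, Finset.mem_filter] at hi
    push_neg at hi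
    by_cases h0 : h i * g i = 0
    · rw [h0]; rfl
    · refine coeff_eq_zero_of_ms_lt (mo := mo) ?_
      rw [hDsyn]
      exact lt_of_le_of_ne (hmsle i) (hi (Finset.mem_univ i) h0)
  have hlexp_top : ∀ i ∈ S, lexp mo (h i * g i) = D := by
    intro i hi
    rw [hSdef, Finset.mem_filter] at hi
    rw [lexp, hi.2.2]
  have hcoeff_topS : ∀ i ∈ S, (h i * g i).coeff D = lc mo (h i * g i) := by
    intro i hi
    rw [lc, hlexp_top i hi]
  have hmsf : ms mo f ≤ t₀ := by
    refine ms_le_of_forall fun e he => ?_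
    rw [← hsum] at he
    obtain ⟨i, -, hei⟩ := Finset.mem_biUnion.mp (MvPolynomial.support_sum he)
    exact le_trans (le_ms hei) (hmsle i)
  rcases eq_or_lt_of_le hmsf with hms | hms
  · -- the leading monomial of f is realized; extract divisibility
    have hlf : lexp mo f = D := by rw [lexp, hms]
    have h1 : f.coeff D ≠ 0 := by
      rw [← hlf]; exact lc_ne_zero hf0
    rw [hcoefff] at h1
    obtain ⟨i, -, hi⟩ := Finset.exists_ne_zero_of_sum_ne_zero h1
    have hiS : i ∈ S := by
      by_contra hiS
      exact hi (hcoeff_top i hiS)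
    rw [hSdef, Finset.mem_filter] at hiS
    have hhi : h i ≠ 0 := fun h0 => hiS.2.1 (by rw [h0, zero_mul])
    obtain ⟨-, hlexpm, -⟩ := ms_mul (mo := mo) hhi (hg i)
    refine ⟨i, ?_⟩
    have : lexp mo (g i) ≤ lexp mo (h i * g i) := by
      rw [hlexpm]; exact le_add_self
    rwa [hlexp_top i (by rw [hSdef, Finset.mem_filter]; exact ⟨Finset.mem_univ i, hiS.2⟩), ← hlf]
      at this
  · -- cancellation at the top: derive a contradiction with minimality
    exfalso
    have ht₀pos : 0 < t₀ := lt_of_le_of_lt (zero_le_syn _) hms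
    -- S is nonempty
    obtain ⟨i0, -, hi0⟩ := Finset.exists_mem_eq_sup Finset.univ Finset.univ_nonempty
      (fun i => ms mo (h i * g i))
    rw [hsup] at hi0
    have hi0ne : h i0 * g i0 ≠ 0 := by
      intro h0
      rw [h0, ms_zero] at hi0
      exact absurd hi0 (ne_of_gt ht₀pos)
    have hi0S : i0 ∈ S := by
      rw [hSdef, Finset.mem_filter]
      exact ⟨Finset.mem_univ i0, hi0ne, hi0.symm⟩
    -- top coefficients cancel
    have hfD : f.coeff D = 0 := by
      refine coeff_eq_zero_of_ms_lt (mo := mo) ?_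
      rw [hDsyn]; exact hms
    have hsumS : ∑ i ∈ S, (h i * g i).coeff D = 0 := by
      rw [← hfD, hcoefff]
      exact Finset.sum_subset (Finset.subset_univ S) (fun i _ hi => hcoeff_top i hi)
    -- S has at least two elements
    have hScard : 1 < S.card := by
      by_contra hc
      push_neg at hc
      interval_cases hS : S.card
      · exact absurd (Finset.card_eq_zero.mp hS ▸ hi0S) (Finset.notMem_empty i0)
      · obtain ⟨j, hj⟩ := Finset.card_eq_one.mp hS
        rw [hj, Finset.sum_singleton] at hsumS
        have hjS : j ∈ S := by rw [hj]; exact Finset.mem_singleton_self j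
        rw [hSdef, Finset.mem_filter] at hjS
        rw [hcoeff_topS j (by rw [hj]; exact Finset.mem_singleton_self j)] at hsumS
        exact lc_ne_zero hjS.2.1 hsumS
    obtain ⟨j, hjS, l, hlS, hjl⟩ := Finset.one_lt_card.mp hScard
    have hjS' := hjS; have hlS' := hlS
    rw [hSdef, Finset.mem_filter] at hjS' hlS'
    have hhj : h j ≠ 0 := fun h0 => hjS'.2.1 (by rw [h0, zero_mul])
    have hhl : h l ≠ 0 := fun h0 => hlS'.2.1 (by rw [h0, zero_mul])
    obtain ⟨hmsj, hlexpj, -⟩ := ms_mul (mo := mo) hhj (hg j)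
    obtain ⟨hmsl, hlexpl, -⟩ := ms_mul (mo := mo) hhl (hg l)
    have hDj : lexp mo (h j) + lexp mo (g j) = D := by
      rw [← hlexpj]; exact hlexp_top j hjS
    have hDl : lexp mo (h l) + lexp mo (g l) = D := by
      rw [← hlexpl]; exact hlexp_top l hlS
    -- lexp (g l) ≤ lexp (h j)
    have hle : lexp mo (g l) ≤ lexp mo (h j) := by
      rw [Finsupp.le_def]
      intro v
      rcases hdisj j l hjl v with h0 | h0
      · have : (lexp mo (h j)) v + (lexp mo (g j)) v = D v := by
          rw [← hDj, Finsupp.add_apply]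
        have hDv : (lexp mo (h j)) v = D v := by omega
        have : (lexp mo (g l)) v ≤ D v := by
          rw [← hDl, Finsupp.add_apply]; omega
        omega
      · rw [h0]; exact Nat.zero_le _
    set c := lc mo (h j) with hc
    set b := lc mo (g l) with hb
    set β := lexp mo (h j) - lexp mo (g l) with hβdef
    have hβ : β + lexp mo (g l) = lexp mo (h j) := tsub_add_cancel_of_le hle
    set q : MvPolynomial σ K := monomial β (c / b) with hq
    set gl' := g l - monomial (lexp mo (g l)) b with hgl'
    have hqgl : q * g l = q * gl' + monomial (lexp mo (h j)) c := by
      have h1 : g l = gl' + monomial (lexp mo (g l)) b := by rw [hgl']; ring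
      calc q * g l = q * gl' + q * monomial (lexp mo (g l)) b := by rw [← mul_add, ← h1]
        _ = q * gl' + monomial (lexp mo (h j)) c := by
            rw [hq, MvPolynomial.monomial_mul, hβ, div_mul_cancel₀ c (lc_ne_zero (hg l))]
    set u : MvPolynomial σ K := - monomial (lexp mo (h j)) c - q * gl' with hu
    set w : MvPolynomial σ K := q * g j with hw
    set h' : ι → MvPolynomial σ K :=
      fun i => h i + (if i = j then u else 0) + (if i = l then w else 0) with hh'
    have hh'j : h' j = h j + u := by simp [hh', if_neg hjl]
    have hh'l : h' l = h l + w := by simp [hh', if_neg (Ne.symm hjl)]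
    have hh'other : ∀ i, i ≠ j → i ≠ l → h' i = h i := by
      intro i hij hil; simp [hh', if_neg hij, if_neg hil]
    have hkey : u * g j + w * g l = 0 := by
      have h1 : w * g l = (q * g l) * g j := by rw [hw]; ring
      rw [h1, hqgl, hu]
      ring
    have hsum' : ∑ i, h' i * g i = f := by
      have : ∀ i, h' i * g i
          = h i * g i + (if i = j then u * g i else 0) + (if i = l then w * g i else 0) := by
        intro i
        show (h i + (if i = j then u else 0) + (if i = l then w else 0)) * g i = _
        by_cases hij : i = j
        · subst hij
          rw [if_pos rfl, if_pos rfl, if_neg hjl, if_neg hjl]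
          ring
        · by_cases hil : i = l
          · subst hil
            rw [if_neg hij, if_neg hij, if_pos rfl, if_pos rfl]
            ring
          · rw [if_neg hij, if_neg hij, if_neg hil, if_neg hil]
            ring
      rw [Finset.sum_congr rfl (fun i _ => this i)]
      rw [Finset.sum_add_distrib, Finset.sum_add_distrib, Finset.sum_ite_eq' Finset.univ j,
        Finset.sum_ite_eq' Finset.univ l, if_pos (Finset.mem_univ j), if_pos (Finset.mem_univ l),
        hsum, add_assoc, hkey, add_zero]
    -- degree bounds for the new representation
    have hbltj : blt mo (h' j * g j) t₀ := by
      have e1 : h' j * g j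
          = (h j - monomial (lexp mo (h j)) c) * g j - (q * gl') * g j := by
        rw [hh'j, hu]; ring
      rw [e1]
      have b1 : blt mo ((h j - monomial (lexp mo (h j)) c) * g j) t₀ := by
        have h3 := blt_mul_ble (mo := mo) (blt_sub_leadTerm (h j)) (ble_self (g j))
        rwa [← hmsj, hjS'.2.2] at h3
      have b2 : blt mo ((q * gl') * g j) t₀ := by
        have hq1 : ble mo q (mo.toSyn β) := ble_monomial β (c / b)
        have hg1 : blt mo gl' (ms mo (g l)) := blt_sub_leadTerm (g l)
        have := blt_mul_ble (mo := mo) (ble_mul_blt hq1 hg1) (ble_self (g j))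
        have heq : mo.toSyn β + ms mo (g l) + ms mo (g j) = t₀ := by
          rw [← toSyn_lexp (g l), ← map_add, hβ, toSyn_lexp, ← hmsj]
          exact hjS'.2.2
        rwa [heq] at this
      exact blt_sub b1 b2
    have hblel : ble mo (h' l * g l) t₀ := by
      have e1 : h' l * g l = h l * g l + (q * g j) * g l := by rw [hh'l, hw]; ring
      rw [e1]
      refine ble_add (ble_ms_iff.mpr (hmsle l)) ?_
      have hq1 : ble mo q (mo.toSyn β) := ble_monomial β (c / b)
      have := ble_mul (mo := mo) (ble_mul hq1 (ble_self (g j))) (ble_self (g l))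
      have heq : mo.toSyn β + ms mo (g j) + ms mo (g l) = t₀ := by
        have h2 : mo.toSyn β + ms mo (g l) + ms mo (g j) = t₀ := by
          rw [← toSyn_lexp (g l), ← map_add, hβ, toSyn_lexp, ← hmsj]
          exact hjS'.2.2
        rw [← h2]
        exact add_right_comm _ _ _
      rwa [heq] at this
    have hble' : ∀ i, ms mo (h' i * g i) ≤ t₀ := by
      intro i
      by_cases hij : i = j
      · subst hij
        exact ble_ms_iff.mp (blt.ble hbltj)
      by_cases hil : i = l
      · subst hil
        exact ble_ms_iff.mp hblel
      · rw [hh'other i hij hil]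
        exact hmsle i
    have hsup'le : Finset.univ.sup (fun i => ms mo (h' i * g i)) ≤ t₀ :=
      Finset.sup_le fun i _ => hble' i
    have hsup' : Finset.univ.sup (fun i => ms mo (h' i * g i)) = t₀ := by
      rcases eq_or_lt_of_le hsup'le with h1 | h1
      · exact h1
      · exact absurd h1 (ht₀min _ ⟨h', hsum', rfl⟩)
    set S' := (Finset.univ.filter (fun i => h' i * g i ≠ 0 ∧ ms mo (h' i * g i) = t₀))
      with hS'def
    have hS'sub : S' ⊆ S.erase j := by
      intro i hi
      rw [hS'def, Finset.mem_filter] at hi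
      by_cases hij : i = j
      · exfalso
        subst hij
        exact absurd hi.2.2 (ne_of_lt (ms_lt_of_blt hi.2.1 hbltj))
      · rw [Finset.mem_erase]
        refine ⟨hij, ?_⟩
        by_cases hil : i = l
        · subst hil; exact hlS
        · rw [hh'other i hij hil] at hi
          rw [hSdef, Finset.mem_filter]
          exact ⟨Finset.mem_univ i, hi.2⟩
    have hcard' : S'.card < k₀ := by
      calc S'.card ≤ (S.erase j).card := Finset.card_le_card hS'sub
        _ = S.card - 1 := Finset.card_erase_of_mem hjS
        _ < S.card := by omega
        _ = k₀ := hcard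
    exact hkmin S'.card ⟨h', hsum', hsup', rfl⟩ hcard'


theorem lexp_pow {f : MvPolynomial σ K} (hf : f ≠ 0) (n : ℕ) :
    lexp mo (f ^ (n + 1)) = (n + 1) • lexp mo f := by
  induction n with
  | zero => rw [zero_add, pow_one, one_smul]
  | succ n ih =>
    have h1 : f ^ (n + 1 + 1) = f ^ (n + 1) * f := by ring
    obtain ⟨-, hlexp, -⟩ := ms_mul (mo := mo) (pow_ne_zero (n + 1) hf) hf
    rw [h1, hlexp, ih]
    exact (succ_nsmul _ _).symm

theorem isRadical_span {ι : Type*} [Fintype ι] [Nonempty ι]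
    {g : ι → MvPolynomial σ K} (hg : ∀ i, g i ≠ 0)
    (hdisj : ∀ i j, i ≠ j → ∀ v, lexp mo (g i) v = 0 ∨ lexp mo (g j) v = 0)
    (hsq : ∀ i v, lexp mo (g i) v ≤ 1) :
    (Ideal.span (Set.range g)).IsRadical := by
  set I := Ideal.span (Set.range g) with hI
  have main : ∀ t : mo.syn, ∀ y : MvPolynomial σ K, ms mo y = t →
      (∃ n, y ^ n ∈ I) → y ∈ I := by
    intro t
    induction t using WellFoundedLT.induction with
    | _ t IH =>
      rintro y rfl ⟨n, hn⟩
      by_cases hy0 : y = 0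
      · rw [hy0]; exact I.zero_mem
      rcases Nat.eq_zero_or_pos n with rfl | hnpos
      · rw [pow_zero] at hn
        exact (Ideal.eq_top_iff_one I).mpr hn ▸ Submodule.mem_top
      -- y^n ≠ 0, find a generator whose leading monomial divides lexp y
      have hyn : y ^ n ≠ 0 := pow_ne_zero n hy0
      obtain ⟨i, hi⟩ := exists_lexp_le_of_mem_span (mo := mo) hg hdisj hn hyn
      have hipow : lexp mo (y ^ n) = n • lexp mo y := by
        obtain ⟨n', rfl⟩ := Nat.exists_eq_add_of_lt hnpos
        rw [zero_add] at *
        exact lexp_pow hy0 n'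
      have hdvd : lexp mo (g i) ≤ lexp mo y := by
        rw [hipow] at hi
        rw [Finsupp.le_def] at hi ⊢
        intro v
        have h1 := hi v
        have h2 := hsq i v
        rw [Finsupp.smul_apply, smul_eq_mul] at h1
        rcases Nat.eq_zero_or_pos ((lexp mo y) v) with h3 | h3
        · rw [h3, mul_zero] at h1
          omega
        · omega
      -- reduce y by a multiple of g i
      set δ := lexp mo (g i) with hδ
      set b := lc mo (g i) with hb
      set q : MvPolynomial σ K := monomial (lexp mo y - δ) (lc mo y / b) with hq
      set u := q * g i with hu
      have huI : u ∈ I := Ideal.mul_mem_left I q (Ideal.subset_span ⟨i, rfl⟩)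
      have hqg : u = q * (g i - monomial δ b) + monomial (lexp mo y) (lc mo y) := by
        rw [hu, mul_sub]
        have : q * monomial δ b = monomial (lexp mo y) (lc mo y) := by
          rw [hq, MvPolynomial.monomial_mul, tsub_add_cancel_of_le hdvd,
            div_mul_cancel₀ _ (lc_ne_zero (hg i))]
        rw [this]; ring
      set y' := y - u with hy'
      have hblt : blt mo y' (ms mo y) := by
        have e1 : y' = (y - monomial (lexp mo y) (lc mo y)) - q * (g i - monomial δ b) := by
          rw [hy', hqg]; ring
        rw [e1]
        refine blt_sub (blt_sub_leadTerm y) ?_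
        have h1 := ble_mul_blt (mo := mo) (ble_monomial (lexp mo y - δ) (lc mo y / b))
          (blt_sub_leadTerm (g i))
        have h2 : mo.toSyn (lexp mo y - δ) + ms mo (g i) = ms mo y := by
          rw [← toSyn_lexp (g i), ← map_add, tsub_add_cancel_of_le hdvd, toSyn_lexp]
        rwa [h2] at h1
      have hy'pows : ∃ k, y' ^ k ∈ I := by
        refine ⟨n, ?_⟩
        have : Ideal.Quotient.mk I y' = Ideal.Quotient.mk I y := by
          rw [Ideal.Quotient.mk_eq_mk_iff_sub_mem]
          simpa [hy'] using I.neg_mem huI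
        rw [← Ideal.Quotient.eq_zero_iff_mem, map_pow, this, ← map_pow,
          Ideal.Quotient.eq_zero_iff_mem]
        exact hn
      by_cases hy'0 : y' = 0
      · have : y = u := by rw [← sub_eq_zero]; exact hy'0
        rw [this]; exact huI
      · have hlt : ms mo y' < ms mo y := ms_lt_of_blt hy'0 hblt
        have hy'I : y' ∈ I := IH (ms mo y') hlt y' rfl hy'pows
        have : y = y' + u := by rw [hy']; ring
        rw [this]
        exact I.add_mem hy'I huI
  intro y hy
  obtain ⟨n, hn⟩ := hy
  exact main _ y rfl ⟨n, hn⟩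

instance (m n : ℕ) : Fintype (Fin m ×ₗ Fin n) := inferInstanceAs (Fintype (Fin m × Fin n))

noncomputable def lexOrder (m n : ℕ) : MonomialOrder (Fin m × Fin n) where
  syn := (MonomialOrder.lex (σ := Fin m ×ₗ Fin n)).syn
  toSyn := (Finsupp.domCongr (toLex : Fin m × Fin n ≃ Fin m ×ₗ Fin n)).trans
    (MonomialOrder.lex (σ := Fin m ×ₗ Fin n)).toSyn
  toSyn_monotone := by
    intro a b hab
    refine (MonomialOrder.lex (σ := Fin m ×ₗ Fin n)).toSyn_monotone ?_
    show (Finsupp.domCongr (toLex : Fin m × Fin n ≃ Fin m ×ₗ Fin n) a) ≤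
      Finsupp.domCongr (toLex : Fin m × Fin n ≃ Fin m ×ₗ Fin n) b
    rw [Finsupp.le_def] at hab ⊢
    intro x
    exact hab (ofLex x)

variable {K : Type*} [Field K] {m n : ℕ}

/-- exponent of the monomial of the permutation `τ` in the expansion of the minor -/
noncomputable def pexp (col : Fin m → Fin n) (τ : Equiv.Perm (Fin m)) : Fin m × Fin n →₀ ℕ :=
  ∑ j : Fin m, Finsupp.single (τ j, col j) 1

theorem pexp_apply (col : Fin m → Fin n) (hcol : Function.Injective col)
    (τ : Equiv.Perm (Fin m)) (r : Fin m) (s : Fin n) :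
    pexp col τ (r, s) = if s = col (τ.symm r) then 1 else 0 := by
  classical
  rw [pexp, Finsupp.finset_sum_apply]
  rw [Finset.sum_eq_single (τ.symm r)]
  · rw [Finsupp.single_apply, Equiv.apply_symm_apply]
    by_cases h : s = col (τ.symm r)
    · subst h
      rw [if_pos rfl, if_pos rfl]
    · rw [if_neg (fun hc => h ((Prod.mk.injEq _ _ _ _).mp hc).2.symm), if_neg h]
  · intro j _ hj
    rw [Finsupp.single_apply, if_neg]
    intro hc
    exact hj (by rw [← Equiv.symm_apply_apply τ j, (Prod.mk.injEq _ _ _ _).mp hc |>.1])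
  · intro h
    exact absurd (Finset.mem_univ _) h


theorem pexp_lt (col : Fin m → Fin n) (hcol : StrictMono col)
    (τ : Equiv.Perm (Fin m)) (hτ : τ ≠ 1) :
    (lexOrder m n).toSyn (pexp col τ) < (lexOrder m n).toSyn (pexp col 1) := by
  classical
  show (MonomialOrder.lex (σ := Fin m ×ₗ Fin n)).toSyn
      (Finsupp.domCongr (toLex : Fin m × Fin n ≃ Fin m ×ₗ Fin n) (pexp col τ))
    < (MonomialOrder.lex (σ := Fin m ×ₗ Fin n)).toSyn
      (Finsupp.domCongr (toLex : Fin m × Fin n ≃ Fin m ×ₗ Fin n) (pexp col 1))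
  rw [MonomialOrder.lex_lt_iff]
  have hne : (Finset.univ.filter (fun i : Fin m => τ.symm i ≠ i)).Nonempty := by
    by_contra hc
    rw [Finset.not_nonempty_iff_eq_empty, Finset.filter_eq_empty_iff] at hc
    apply hτ
    ext i
    have h2 := hc (Finset.mem_univ (τ i))
    push_neg at h2
    rw [Equiv.symm_apply_apply] at h2
    rw [Equiv.Perm.one_apply]
    exact congrArg Fin.val h2.symm
  obtain ⟨i₀, hi₀F, hi₀min⟩ := Finset.exists_min_image _ id hne
  have hi₀mem : τ.symm i₀ ≠ i₀ := (Finset.mem_filter.mp hi₀F).2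
  have hmin : ∀ i : Fin m, i < i₀ → τ.symm i = i := by
    intro i hi
    by_contra hc
    exact absurd (hi₀min i (Finset.mem_filter.mpr ⟨Finset.mem_univ i, hc⟩)) (not_le.mpr hi)
  have hgt : i₀ < τ.symm i₀ := by
    rcases lt_or_gt_of_ne hi₀mem with h | h
    · exfalso
      have h2 := hmin _ h
      have h3 : τ (τ.symm (τ.symm i₀)) = τ (τ.symm i₀) := by rw [h2]
      rw [Equiv.apply_symm_apply, Equiv.apply_symm_apply] at h3
      exact hi₀mem h3
    · exact h
  rw [Finsupp.Lex.lt_iff]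
  refine ⟨toLex (i₀, col i₀), ?_, ?_⟩
  · intro x hx
    obtain ⟨⟨r, s⟩, hp⟩ : ∃ p : Fin m × Fin n, ofLex x = p := ⟨ofLex x, rfl⟩
    have hx0 : x = toLex (r, s) := congrArg toLex hp
    subst hx0
    have hx' : toLex ((r, s) : Fin m × Fin n) < toLex (i₀, col i₀) := hx
    rw [Prod.Lex.lt_iff] at hx'
    show pexp col τ (r, s) = pexp col 1 (r, s)
    rw [pexp_apply col hcol.injective, pexp_apply col hcol.injective]
    rcases hx' with h | ⟨h1, h2⟩
    · rw [hmin r h]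
      rfl
    · simp only [ofLex_toLex] at h1 h2
      subst h1
      have hA : ¬ s = col (τ.symm r) := by
        intro hc
        have h3 := hcol hgt
        rw [← hc] at h3
        exact absurd h2 (lt_asymm h3)
      have hB : ¬ s = col ((1 : Equiv.Perm (Fin m)).symm r) := by
        intro hc
        simp only [Equiv.Perm.one_def, Equiv.refl_symm, Equiv.refl_apply] at hc
        rw [hc] at h2
        exact lt_irrefl _ h2
      rw [if_neg hA, if_neg hB]
  · show pexp col τ (i₀, col i₀) < pexp col 1 (i₀, col i₀)
    rw [pexp_apply col hcol.injective, pexp_apply col hcol.injective]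
    have hA : ¬ col i₀ = col (τ.symm i₀) := by
      intro hc
      exact absurd (hcol.injective hc) (Ne.symm hi₀mem)
    have hB : col i₀ = col ((1 : Equiv.Perm (Fin m)).symm i₀) := rfl
    rw [if_neg hA, if_pos hB]
    exact Nat.zero_lt_one


theorem prod_X_eq {ι : Type*} (s : Finset ι) (v : ι → Fin m × Fin n) :
    ∏ j ∈ s, (X (v j) : MvPolynomial (Fin m × Fin n) K)
      = monomial (∑ j ∈ s, Finsupp.single (v j) 1) 1 := by
  classical
  induction s using Finset.induction with
  | empty => simp
  | insert a s h ih =>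
    rw [Finset.prod_insert h, Finset.sum_insert h, ih, monomial_single_add, pow_one]

theorem det_expand (col : Fin m → Fin n) :
    (Matrix.of fun i j : Fin m => (X (i, col j) : MvPolynomial (Fin m × Fin n) K)).det
      = ∑ τ : Equiv.Perm (Fin m), Equiv.Perm.sign τ • monomial (pexp col τ) (1 : K) := by
  rw [Matrix.det_apply]
  refine Finset.sum_congr rfl fun τ _ => ?_
  congr 1
  exact prod_X_eq Finset.univ (fun j => (τ j, col j))

theorem coeff_det_diag (col : Fin m → Fin n) (hcol : StrictMono col) :
    MvPolynomial.coeff (pexp col 1)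
      ((Matrix.of fun i j : Fin m => (X (i, col j) : MvPolynomial (Fin m × Fin n) K)).det) = 1 := by
  classical
  rw [det_expand, MvPolynomial.coeff_sum]
  rw [Finset.sum_eq_single (1 : Equiv.Perm (Fin m))]
  · rw [MvPolynomial.coeff_smul, MvPolynomial.coeff_monomial, if_pos rfl]
    simp
  · intro τ _ hτ
    rw [MvPolynomial.coeff_smul, MvPolynomial.coeff_monomial, if_neg, smul_zero]
    intro hc
    exact absurd (congrArg (lexOrder m n).toSyn hc) (ne_of_lt (pexp_lt col hcol τ hτ))
  · intro h
    exact absurd (Finset.mem_univ _) h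

theorem det_ne_zero (col : Fin m → Fin n) (hcol : StrictMono col) :
    ((Matrix.of fun i j : Fin m => (X (i, col j) : MvPolynomial (Fin m × Fin n) K)).det) ≠ 0 := by
  intro hc
  have := coeff_det_diag (K := K) col hcol
  rw [hc] at this
  simp at this

theorem lexp_det (col : Fin m → Fin n) (hcol : StrictMono col) :
    lexp (lexOrder m n)
      ((Matrix.of fun i j : Fin m => (X (i, col j) : MvPolynomial (Fin m × Fin n) K)).det)
      = pexp col 1 := by
  classical
  have hmem : pexp col 1 ∈ (MvPolynomial.support
      ((Matrix.of fun i j : Fin m => (X (i, col j) : MvPolynomial (Fin m × Fin n) K)).det)) := by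
    rw [MvPolynomial.mem_support_iff, coeff_det_diag col hcol]
    exact one_ne_zero
  have hle : ms (lexOrder m n)
      ((Matrix.of fun i j : Fin m => (X (i, col j) : MvPolynomial (Fin m × Fin n) K)).det)
      ≤ (lexOrder m n).toSyn (pexp col 1) := by
    refine Finset.sup_le fun e he => ?_
    rw [det_expand] at he
    obtain ⟨τ, -, hτ⟩ := Finset.mem_biUnion.mp (MvPolynomial.support_sum he)
    have hsub : e ∈ (monomial (pexp col τ) (1 : K)).support := by
      have h1 := MvPolynomial.support_smul hτ
      exact h1
    rw [MvPolynomial.support_monomial, if_neg (one_ne_zero (α := K))] at hsub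
    rcases Finset.mem_singleton.mp hsub with rfl
    by_cases h1 : τ = 1
    · subst h1; exact le_rfl
    · exact le_of_lt (pexp_lt col hcol τ h1)
  have hge := Finset.le_sup (f := fun e => (lexOrder m n).toSyn e) hmem
  have hms : ms (lexOrder m n)
      ((Matrix.of fun i j : Fin m => (X (i, col j) : MvPolynomial (Fin m × Fin n) K)).det)
      = (lexOrder m n).toSyn (pexp col 1) := le_antisymm hle hge
  rw [lexp, hms]
  exact (lexOrder m n).toSyn.symm_apply_apply _

end AdjRad

/-- the ideal of adjacent maximal minors is radical. -/
theorem adjMaxIdeal_isRadical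
    (K : Type*) [Field K] (m n : ℕ) (hm : 2 ≤ m) (hmn : m ≤ n) :
    (adjMaxIdeal K m n).IsRadical := by
  classical
  haveI : Nonempty (Fin (n - m + 1)) := ⟨⟨0, Nat.succ_pos _⟩⟩
  set g : Fin (n - m + 1) → MvPolynomial (Fin m × Fin n) K :=
    fun i => adjMaxMinor K m n i.val (by have := i.2; omega) with hgdef
  have hspan : adjMaxIdeal K m n = Ideal.span (Set.range g) := by
    unfold adjMaxIdeal
    congr 1
    ext f
    constructor
    · rintro ⟨c, hc, rfl⟩
      exact ⟨⟨c, by omega⟩, rfl⟩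
    · rintro ⟨i, rfl⟩
      exact ⟨i.val, by have := i.2; omega, rfl⟩
  rw [hspan]
  set col : Fin (n - m + 1) → Fin m → Fin n :=
    fun i j => ⟨i.val + j.val, by have h1 := i.2; have h2 := j.2; omega⟩ with hcoldef
  have hcolmono : ∀ i, StrictMono (col i) := by
    intro i a b hab
    rw [Fin.lt_def] at hab ⊢
    simp only [hcoldef]
    omega
  have hgcol : ∀ i, g i
      = (Matrix.of fun a b : Fin m => (X (a, col i b) : MvPolynomial (Fin m × Fin n) K)).det :=
    fun i => rfl
  have hg0 : ∀ i, g i ≠ 0 := by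
    intro i
    rw [hgcol i]
    exact AdjRad.det_ne_zero (col i) (hcolmono i)
  have hlexp : ∀ i, AdjRad.lexp (AdjRad.lexOrder m n) (g i) = AdjRad.pexp (col i) 1 := by
    intro i
    rw [hgcol i]
    exact AdjRad.lexp_det (col i) (hcolmono i)
  have hsq : ∀ i v, AdjRad.lexp (AdjRad.lexOrder m n) (g i) v ≤ 1 := by
    intro i v
    obtain ⟨r, s⟩ := v
    rw [hlexp i, AdjRad.pexp_apply (col i) (hcolmono i).injective 1 r s]
    split <;> omega
  have hdisj : ∀ i j, i ≠ j → ∀ v,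
      AdjRad.lexp (AdjRad.lexOrder m n) (g i) v = 0 ∨ AdjRad.lexp (AdjRad.lexOrder m n) (g j) v = 0 := by
    intro i j hij v
    obtain ⟨r, s⟩ := v
    rw [hlexp i, hlexp j, AdjRad.pexp_apply (col i) (hcolmono i).injective 1 r s,
      AdjRad.pexp_apply (col j) (hcolmono j).injective 1 r s]
    by_cases h1 : s = col i ((1 : Equiv.Perm (Fin m)).symm r)
    · right
      rw [if_neg]
      intro h2
      apply hij
      have e1 : s.val = i.val + r.val := by rw [h1]; rfl
      have e2 : s.val = j.val + r.val := by rw [h2]; rfl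
      exact Fin.ext (by omega)
    · left
      rw [if_neg h1]
  exact AdjRad.isRadical_span (mo := AdjRad.lexOrder m n) hg0 hdisj hsq
end
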